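/- arXiv:2211.01688 — 4 statements merged into one kernel-verified Lean document; each statement's English description precedes it below -/
import Mathlib

section
/- Let k be a nonnegative integer, n a positive integer with k ≤ n, 0 < p < 1 with q = 1 - p, and f = k/n. Then B_{n,k}(p)/b_{n,k}(p) ≥ L(n,k,p) ≥ 1, with equality in both places when k = 0 and strict inequalities when k ≥ 1. Moreover, if k < p·n then L(n,k,p) ≥ max{1, (1-f)·p/(p-f) - f·p·q·(1-f)/((p-f)³·n)}, and if k ≥ p·n then L(n,k,p) ≥ (1 + √(4·q·k + 1))/2. -/
open Real

set_option maxHeartbeats 1000000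

/-- Binomial probability `b_{n,k}(p)`. -/
noncomputable def b (n k : ℕ) (p : ℝ) : ℝ :=
  (n.choose k : ℝ) * p ^ k * (1 - p) ^ (n - k)

/-- Lower tail probability `B_{n,k}(p)`. -/
noncomputable def B (n k : ℕ) (p : ℝ) : ℝ :=
  ∑ j ∈ Finset.range (k + 1), (n.choose j : ℝ) * p ^ j * (1 - p) ^ (n - j)

noncomputable def L (n k p : ℝ) : ℝ :=
  (k + 1 - p * n + Real.sqrt ((p * n - k + 1) ^ 2 + 4 * (1 - p) * k)) / 2

lemma b_nonneg (n k : ℕ) {p : ℝ} (hp0 : 0 < p) (hp1 : p < 1) : 0 ≤ b n k p := by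
  have h1 : (0:ℝ) < 1 - p := by linarith
  unfold b; positivity

lemma b_pos {n k : ℕ} (hkn : k ≤ n) {p : ℝ} (hp0 : 0 < p) (hp1 : p < 1) : 0 < b n k p := by
  have h1 : (0:ℝ) < 1 - p := by linarith
  have h2 : (0:ℝ) < (n.choose k : ℝ) := by exact_mod_cast Nat.choose_pos hkn
  unfold b; positivity

lemma B_eq (n m : ℕ) (p : ℝ) : B n m p = ∑ j ∈ Finset.range (m+1), b n j p := rfl

lemma ratio_id {n j : ℕ} (hj : j < n) (p : ℝ) :
    ((j:ℝ)+1) * (1-p) * b n (j+1) p = ((n:ℝ) - j) * p * b n j p := by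
  have hc : (n.choose (j+1) : ℝ) * ((j:ℝ)+1) = (n.choose j : ℝ) * ((n:ℝ) - (j:ℝ)) := by
    have h := Nat.choose_succ_right_eq n j
    have h2 : ((n - j : ℕ) : ℝ) = (n:ℝ) - (j:ℝ) := by
      rw [Nat.cast_sub hj.le]
    calc (n.choose (j+1) : ℝ) * ((j:ℝ)+1) = ((n.choose (j+1) * (j+1) : ℕ) : ℝ) := by push_cast; ring
      _ = ((n.choose j * (n - j) : ℕ) : ℝ) := by rw [h]
      _ = (n.choose j : ℝ) * ((n:ℝ) - (j:ℝ)) := by push_cast [h2]; ring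
  have hnj : n - j = (n - (j+1)) + 1 := by omega
  unfold b
  rw [hnj, pow_succ, pow_succ]
  linear_combination (p^j * p * (1-p)^(n-(j+1)) * (1-p)) * hc

lemma sum_id {n : ℕ} (p : ℝ) : ∀ k, k ≤ n →
    ∑ j ∈ Finset.range (k+1), ((n:ℝ)*p - j) * b n j p = ((n:ℝ) - k) * p * b n k p := by
  intro k
  induction k with
  | zero => intro _; simp
  | succ m ih =>
    intro h
    rw [Finset.sum_range_succ, ih (by omega)]
    have hr := ratio_id (show m < n by omega) p
    push_cast
    linear_combination -hr

lemma lc_step {n a e : ℕ} (hae : a ≤ e) (hen : e < n) {p : ℝ} (hp0 : 0 < p) (hp1 : p < 1) :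
    b n a p * b n (e+1) p ≤ b n (a+1) p * b n e p := by
  have h1 := ratio_id (show a < n by omega) p
  have h2 := ratio_id hen p
  have hq : (0:ℝ) < 1 - p := by linarith
  have hna : (0:ℝ) < (n:ℝ) - a := by
    have : (a:ℝ) < n := by exact_mod_cast lt_of_le_of_lt hae hen
    linarith
  have hKpos : (0:ℝ) < (((n:ℝ) - a) * p * ((e:ℝ)+1) * (1-p)) := by positivity
  have hco : ((a:ℝ)+1)*((n:ℝ)-e) ≤ ((e:ℝ)+1)*((n:ℝ)-a) := by
    have hae' : (a:ℝ) ≤ e := by exact_mod_cast hae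
    have hen' : (e:ℝ) < n := by exact_mod_cast hen
    nlinarith
  have key : (((n:ℝ) - a) * p * ((e:ℝ)+1) * (1-p)) * (b n a p * b n (e+1) p)
      = (((a:ℝ)+1)*((n:ℝ)-e)) * (p * (1-p) * (b n (a+1) p * b n e p)) := by
    linear_combination (-(((e:ℝ)+1) * (1-p) * b n (e+1) p)) * h1
      + (((a:ℝ)+1) * (1-p) * b n (a+1) p) * h2
  have hY : (0:ℝ) ≤ p * (1-p) * (b n (a+1) p * b n e p) := by
    have := b_pos (show a+1 ≤ n by omega) hp0 hp1
    have := b_pos (show e ≤ n by omega) hp0 hp1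
    positivity
  have h3 := mul_le_mul_of_nonneg_right hco hY
  have h4 : (((n:ℝ) - a) * p * ((e:ℝ)+1) * (1-p)) * (b n a p * b n (e+1) p)
      ≤ (((n:ℝ) - a) * p * ((e:ℝ)+1) * (1-p)) * (b n (a+1) p * b n e p) := by
    nlinarith [key, h3]
  exact le_of_mul_le_mul_left h4 hKpos

lemma lc {p : ℝ} (hp0 : 0 < p) (hp1 : p < 1) {n : ℕ} :
    ∀ (t j m : ℕ), j + t ≤ m → m ≤ n → b n j p * b n m p ≤ b n (j+t) p * b n (m-t) p := by
  intro t
  induction t with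
  | zero => intro j m _ _; simp
  | succ t ih =>
    intro j m hjm hmn
    by_cases hEq : j + (t+1) = m
    · have h1 : m - (t+1) = j := by omega
      rw [hEq, h1, mul_comm]
    · obtain ⟨m', rfl⟩ : ∃ m', m = m'+1 := ⟨m-1, by omega⟩
      have step := lc_step (show j ≤ m' by omega) (show m' < n by omega) hp0 hp1
      have ihh := ih (j+1) m' (by omega) (by omega)
      have e1 : j + 1 + t = j + (t+1) := by omega
      have e2 : m' - t = m' + 1 - (t+1) := by omega
      rw [e1, e2] at ihh
      exact le_trans step ihh

lemma per_i {n i k : ℕ} (hik : i ≤ k) (hkn : k ≤ n) {p : ℝ} (hp0 : 0 < p) (hp1 : p < 1) :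
    b n k p * B n i p ≤ b n i p * B n k p := by
  rw [B_eq, B_eq, Finset.mul_sum, Finset.mul_sum]
  have step1 : ∀ j ∈ Finset.range (i+1), b n k p * b n j p ≤ b n i p * b n ((k-i)+j) p := by
    intro j hj
    have hji : j ≤ i := by simpa [Nat.lt_succ_iff] using hj
    have h := lc hp0 hp1 (i-j) j k (by omega) hkn
    have e1 : j + (i-j) = i := by omega
    have e2 : k - (i-j) = (k-i)+j := by omega
    rw [e1, e2] at h
    calc b n k p * b n j p = b n j p * b n k p := by ring
      _ ≤ b n i p * b n ((k-i)+j) p := h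
  refine le_trans (Finset.sum_le_sum step1) ?_
  have step2 : ∑ j ∈ Finset.range (i+1), b n ((k-i)+j) p ≤ ∑ j ∈ Finset.range (k+1), b n j p := by
    have e3 : ∑ j ∈ Finset.range (i+1), b n ((k-i)+j) p
        = ∑ m ∈ Finset.Ico (k-i) (k+1), b n m p := by
      rw [Finset.sum_Ico_eq_sum_range]
      have : k + 1 - (k-i) = i+1 := by omega
      rw [this]
    rw [e3, Finset.range_eq_Ico]
    apply Finset.sum_le_sum_of_subset_of_nonneg
    · exact Finset.Ico_subset_Ico (Nat.zero_le _) le_rfl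
    · intro m _ _; exact b_nonneg n m hp0 hp1
  calc ∑ j ∈ Finset.range (i+1), b n i p * b n ((k-i)+j) p
      = b n i p * ∑ j ∈ Finset.range (i+1), b n ((k-i)+j) p := by rw [Finset.mul_sum]
    _ ≤ b n i p * ∑ j ∈ Finset.range (k+1), b n j p :=
        mul_le_mul_of_nonneg_left step2 (b_nonneg n i hp0 hp1)
    _ = ∑ j ∈ Finset.range (k+1), b n i p * b n j p := by rw [Finset.mul_sum]

lemma weights (n : ℕ) (p : ℝ) : ∀ k : ℕ,
    ∑ j ∈ Finset.range (k+1), ((k:ℝ) - j) * b n j p = ∑ i ∈ Finset.range k, B n i p := by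
  intro k
  induction k with
  | zero => simp
  | succ m ih =>
    rw [Finset.sum_range_succ (f := fun i => B n i p), ← ih]
    rw [Finset.sum_range_succ (f := fun j => (((m+1:ℕ):ℝ) - j) * b n j p)]
    have e0 : (((m+1:ℕ):ℝ) - ((m+1:ℕ):ℝ)) * b n (m+1) p = 0 := by ring
    push_cast
    push_cast at e0
    rw [e0, add_zero]
    have split : ∑ j ∈ Finset.range (m+1), ((m:ℝ) + 1 - (j:ℝ)) * b n j p
        = ∑ j ∈ Finset.range (m+1), (((m:ℝ) - j) * b n j p + b n j p) := by
      apply Finset.sum_congr rfl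
      intro j _; ring
    rw [split, Finset.sum_add_distrib, B_eq]

lemma quad {n k : ℕ} (hkn : k ≤ n) {p : ℝ} (hp0 : 0 < p) (hp1 : p < 1) :
    b n k p * (∑ i ∈ Finset.range k, B n i p) ≤ B n k p * (B n k p - b n k p) := by
  have hB : B n k p - b n k p = ∑ i ∈ Finset.range k, b n i p := by
    rw [B_eq, Finset.sum_range_succ]; ring
  rw [hB, Finset.mul_sum, Finset.mul_sum]
  apply Finset.sum_le_sum
  intro i hi
  have hik : i ≤ k := le_of_lt (Finset.mem_range.mp hi)
  calc b n k p * B n i p ≤ b n i p * B n k p := per_i hik hkn hp0 hp1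
    _ = B n k p * b n i p := by ring

lemma quad_strict {n k : ℕ} (hk1 : 1 ≤ k) (hkn : k ≤ n) {p : ℝ} (hp0 : 0 < p) (hp1 : p < 1) :
    b n k p * (∑ i ∈ Finset.range k, B n i p) < B n k p * (B n k p - b n k p) := by
  have hB : B n k p - b n k p = ∑ i ∈ Finset.range k, b n i p := by
    rw [B_eq, Finset.sum_range_succ]; ring
  rw [hB, Finset.mul_sum, Finset.mul_sum]
  apply Finset.sum_lt_sum
  · intro i hi
    have hik : i ≤ k := le_of_lt (Finset.mem_range.mp hi)
    calc b n k p * B n i p ≤ b n i p * B n k p := per_i hik hkn hp0 hp1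
      _ = B n k p * b n i p := by ring
  · refine ⟨0, Finset.mem_range.mpr (by omega), ?_⟩
    have hb0 : 0 < b n 0 p := b_pos (Nat.zero_le n) hp0 hp1
    have hbk : 0 < b n k p := b_pos hkn hp0 hp1
    have hB0 : B n 0 p = b n 0 p := by rw [B_eq, Finset.sum_range_one]
    have hBk : b n k p + b n 0 p ≤ B n k p := by
      rw [B_eq, Finset.sum_range_succ]
      have : b n 0 p ≤ ∑ j ∈ Finset.range k, b n j p := by
        apply Finset.single_le_sum (f := fun j => b n j p)
        · intro j _; exact b_nonneg n j hp0 hp1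
        · exact Finset.mem_range.mpr (by omega)
      linarith
    rw [hB0]
    nlinarith

lemma auxC (p f d n s : ℝ) (hn : 1 ≤ n) (hf : 0 ≤ f) (hd : 0 < d) (hp1 : p < 1)
    (hpdf : p = d + f) (hs0 : 0 ≤ s) (hs : s^2 = (n*d+1)^2 + 4*(1-p)*(f*n)) :
    (1-f)*p/d - f*p*(1-p)*(1-f)/(d^3*n) ≤ (1 - n*d + s)/2 := by
  subst hpdf
  have hn0 : (0:ℝ) < n := by linarith
  have hq : (0:ℝ) < 1 - (d+f) := by linarith
  have hf1 : f < 1 := by linarith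
  have hW : (0:ℝ) < (1+n*d)^2 + (1-(d+f))*f*n := by
    nlinarith [mul_nonneg (mul_nonneg hq.le hf) hn0.le, mul_pos hn0 hd]
  have hG : 0 ≤ f^2*(1-f)^2 + d*(f*(1-f)*(3-2*f)) + d^2*(1-3*f+f^2) := by
    rcases le_or_gt (1-3*f+f^2) 0 with hA | hA
    · nlinarith [mul_nonneg (show (0:ℝ) ≤ 1-f-d by linarith)
          (mul_nonneg (mul_nonneg hf hf) (sq_nonneg (1-f))),
        mul_nonneg hd.le (sq_nonneg (1-f)),
        mul_nonneg (mul_nonneg (show (0:ℝ) ≤ -(1-3*f+f^2) by linarith)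
          (show (0:ℝ) ≤ 1-f by linarith))
          (mul_nonneg hd.le (show (0:ℝ) ≤ 1-f-d by linarith)),
        show (0:ℝ) < 1-f by linarith]
    · nlinarith [mul_nonneg hd.le (mul_nonneg (mul_nonneg hf (show (0:ℝ) ≤ 1-f by linarith))
          (show (0:ℝ) ≤ 3-2*f by linarith)),
        mul_nonneg (sq_nonneg d) hA.le, sq_nonneg (f*(1-f))]
  have hR : 0 ≤ d^3*n^2*(1+n*d) - ((1+n*d)^2 + (1-(d+f))*f*n)*(d^2*n - (d+f)*(1-f)) := by
    have hid : d^3*n^2*(1+n*d) - ((1+n*d)^2 + (1-(d+f))*f*n)*(d^2*n - (d+f)*(1-f))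
        = (d+f)*(1-f) + n*(f^2*(1-f)^2 + d*(f*(1-f)*(3-2*f)) + d^2*(1-3*f+f^2)) := by ring
    rw [hid]
    have h1 := mul_nonneg hn0.le hG
    nlinarith [mul_nonneg (show (0:ℝ) ≤ d+f by linarith) (show (0:ℝ) ≤ 1-f by linarith)]
  have hphit : (1-f)*(d+f)/d - f*(d+f)*(1-(d+f))*(1-f)/(d^3*n)
      ≤ 1 + (1-(d+f))*f*n*(1+n*d)/((1+n*d)^2 + (1-(d+f))*f*n) := by
    rw [← sub_nonneg]
    have hexp : 1 + (1-(d+f))*f*n*(1+n*d)/((1+n*d)^2 + (1-(d+f))*f*n)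
        - ((1-f)*(d+f)/d - f*(d+f)*(1-(d+f))*(1-f)/(d^3*n))
        = (f*(1-(d+f)) * (d^3*n^2*(1+n*d)
            - ((1+n*d)^2 + (1-(d+f))*f*n)*(d^2*n - (d+f)*(1-f))))
          / (d^3*n*((1+n*d)^2 + (1-(d+f))*f*n)) := by
      field_simp
      ring
    rw [hexp]
    apply div_nonneg
    · exact mul_nonneg (mul_nonneg hf hq.le) hR
    · exact (mul_pos (mul_pos (pow_pos hd 3) hn0) hW).le
  have hqfn : (0:ℝ) ≤ (1-(d+f))*f*n := mul_nonneg (mul_nonneg hq.le hf) hn0.le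
  have hX0 : 0 ≤ 1 + n*d + 2*((1-(d+f))*f*n)*(1+n*d)/((1+n*d)^2 + (1-(d+f))*f*n) := by
    have hnum : 0 ≤ 2*((1-(d+f))*f*n)*(1+n*d) := by
      apply mul_nonneg (by linarith) (by nlinarith [mul_pos hn0 hd])
    have := div_nonneg hnum hW.le
    nlinarith [mul_pos hn0 hd]
  have hXs : (1 + n*d + 2*((1-(d+f))*f*n)*(1+n*d)/((1+n*d)^2 + (1-(d+f))*f*n))^2 ≤ s^2 := by
    rw [hs, ← sub_nonneg]
    have hexp2 : (n*d+1)^2 + 4*(1-(d+f))*(f*n)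
        - (1 + n*d + 2*((1-(d+f))*f*n)*(1+n*d)/((1+n*d)^2 + (1-(d+f))*f*n))^2
        = 4*((1-(d+f))*f*n)^3 / ((1+n*d)^2 + (1-(d+f))*f*n)^2 := by
      field_simp
      ring
    rw [hexp2]
    apply div_nonneg
    · have := pow_nonneg hqfn 3
      linarith
    · positivity
  have hXles : 1 + n*d + 2*((1-(d+f))*f*n)*(1+n*d)/((1+n*d)^2 + (1-(d+f))*f*n) ≤ s :=
    le_of_pow_le_pow_left₀ (by norm_num) hs0 hXs
  have hfinal : 1 + (1-(d+f))*f*n*(1+n*d)/((1+n*d)^2 + (1-(d+f))*f*n)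
      = (1 - n*d + (1 + n*d + 2*((1-(d+f))*f*n)*(1+n*d)/((1+n*d)^2 + (1-(d+f))*f*n)))/2 := by
    ring
  linarith [hphit, hXles, hfinal.le, hfinal.ge]

theorem binomial_ratio_lower_bound
    (k : ℕ) (n : ℕ) (hn : 0 < n) (hkn : k ≤ n) (p : ℝ) (hp0 : 0 < p) (hp1 : p < 1) :
    (L n k p ≤ B n k p / b n k p ∧ 1 ≤ L n k p) ∧
    (k = 0 → B n k p / b n k p = L n k p ∧ L n k p = 1) ∧
    (1 ≤ k → L n k p < B n k p / b n k p ∧ 1 < L n k p) ∧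
    ((k : ℝ) < p * n →
      max 1 ((1 - (k : ℝ) / n) * p / (p - (k : ℝ) / n) -
          ((k : ℝ) / n) * p * (1 - p) * (1 - (k : ℝ) / n) / ((p - (k : ℝ) / n) ^ 3 * n))
        ≤ L n k p) ∧
    (p * n ≤ (k : ℝ) → (1 + Real.sqrt (4 * (1 - p) * k + 1)) / 2 ≤ L n k p) := by
  have hq0 : (0:ℝ) < 1 - p := by linarith
  have hk0 : (0:ℝ) ≤ (k:ℝ) := Nat.cast_nonneg k
  have hn0 : (0:ℝ) < (n:ℝ) := by exact_mod_cast hn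
  have hkn' : (k:ℝ) ≤ (n:ℝ) := by exact_mod_cast hkn
  have hb : 0 < b n k p := b_pos hkn hp0 hp1
  have hBb : B n k p - b n k p = ∑ i ∈ Finset.range k, b n i p := by
    rw [B_eq, Finset.sum_range_succ]; ring
  have hBbnn : 0 ≤ B n k p - b n k p := by
    rw [hBb]; exact Finset.sum_nonneg fun i _ => b_nonneg n i hp0 hp1
  have hBpos : 0 < B n k p := by linarith
  have h4qk : (0:ℝ) ≤ 4*(1-p)*(k:ℝ) := by nlinarith
  set s := Real.sqrt ((p*(n:ℝ) - (k:ℝ) + 1)^2 + 4*(1-p)*(k:ℝ)) with hsdef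
  have hs0 : 0 ≤ s := Real.sqrt_nonneg _
  have hs2 : s^2 = (p*(n:ℝ) - (k:ℝ) + 1)^2 + 4*(1-p)*(k:ℝ) :=
    Real.sq_sqrt (add_nonneg (sq_nonneg _) h4qk)
  have hLd : L n k p = ((k:ℝ) + 1 - p*(n:ℝ) + s)/2 := rfl
  have hpnk : (0:ℝ) ≤ 4*p*((n:ℝ) - (k:ℝ)) := by nlinarith
  have hsge1 : p*(n:ℝ) - (k:ℝ) + 1 ≤ s := by
    nlinarith [hs2, hs0, h4qk, sq_nonneg (s - (p*(n:ℝ) - (k:ℝ) + 1))]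
  have hsgeS : (k:ℝ) + 1 - p*(n:ℝ) ≤ s := by
    nlinarith [hs2, hs0, hpnk, sq_nonneg (s - ((k:ℝ) + 1 - p*(n:ℝ)))]
  have hL1 : 1 ≤ L n k p := by rw [hLd]; linarith
  have hLS : (k:ℝ) + 1 - p*(n:ℝ) ≤ L n k p := by rw [hLd]; linarith
  have hQuadL : (L n k p)^2 - ((k:ℝ)+1-p*(n:ℝ))*(L n k p) - p*((n:ℝ)-(k:ℝ)) = 0 := by
    rw [hLd]; linear_combination hs2/4
  have hsum : ∑ i ∈ Finset.range k, B n i p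
      = ((k:ℝ) - (n:ℝ)*p) * B n k p + ((n:ℝ)-(k:ℝ))*p*(b n k p) := by
    have w := weights n p k
    have si := sum_id p k hkn
    have split : ∑ j ∈ Finset.range (k+1), ((k:ℝ) - j) * b n j p
        = ∑ j ∈ Finset.range (k+1), (((k:ℝ) - (n:ℝ)*p) * b n j p + ((n:ℝ)*p - j) * b n j p) := by
      apply Finset.sum_congr rfl; intro j _; ring
    rw [split, Finset.sum_add_distrib, ← Finset.mul_sum, ← B_eq, si] at w
    linarith [w]
  have h6 : ((L n k p)^2 - ((k:ℝ)+1-p*(n:ℝ))*(L n k p) - p*((n:ℝ)-(k:ℝ))) * (b n k p)^2 = 0 := by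
    rw [hQuadL]; ring
  have h5 : 0 < B n k p + (L n k p - ((k:ℝ)+1-p*(n:ℝ))) * b n k p := by nlinarith
  have key : L n k p * b n k p ≤ B n k p := by
    have hquad := quad hkn hp0 hp1
    rw [hsum] at hquad
    nlinarith [hquad, h5, h6]
  refine ⟨⟨(le_div_iff₀ hb).mpr key, hL1⟩, ?_, ?_, ?_, ?_⟩
  · -- k = 0
    intro hk
    subst hk
    have hBb0 : B n 0 p = b n 0 p := by rw [B_eq, Finset.sum_range_one]
    have hL0 : L n (0:ℕ) p = 1 := by
      show ((((0:ℕ)):ℝ) + 1 - p * (n:ℝ) +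
        Real.sqrt ((p * (n:ℝ) - ((0:ℕ):ℝ) + 1) ^ 2 + 4 * (1 - p) * ((0:ℕ):ℝ))) / 2 = 1
      have hpn : (0:ℝ) ≤ p*(n:ℝ) + 1 := by nlinarith
      rw [show (p * (n:ℝ) - ((0:ℕ):ℝ) + 1) ^ 2 + 4 * (1 - p) * ((0:ℕ):ℝ)
          = (p*(n:ℝ)+1)^2 by push_cast; ring, Real.sqrt_sq hpn]
      push_cast; ring
    rw [hBb0, div_self (b_pos (Nat.zero_le n) hp0 hp1).ne']
    exact ⟨hL0.symm, hL0⟩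
  · -- 1 ≤ k : strict
    intro hk1
    have hk1' : (1:ℝ) ≤ (k:ℝ) := by exact_mod_cast hk1
    have h4qkpos : (0:ℝ) < 4*(1-p)*(k:ℝ) := by nlinarith
    have hstrict : p*(n:ℝ) - (k:ℝ) + 1 < s := by
      nlinarith [hs2, hs0, h4qkpos, sq_nonneg (s - (p*(n:ℝ) - (k:ℝ) + 1))]
    have hL1s : 1 < L n k p := by rw [hLd]; linarith
    have keys : L n k p * b n k p < B n k p := by
      have hquad := quad_strict hk1 hkn hp0 hp1
      rw [hsum] at hquad
      nlinarith [hquad, h5, h6]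
    exact ⟨(lt_div_iff₀ hb).mpr keys, hL1s⟩
  · -- k < p n
    intro hkpn
    have hn' : (1:ℝ) ≤ (n:ℝ) := by exact_mod_cast hn
    have hfge : (0:ℝ) ≤ (k:ℝ)/(n:ℝ) := by positivity
    have hd : (0:ℝ) < p - (k:ℝ)/(n:ℝ) := by
      have : (k:ℝ)/(n:ℝ) < p := (div_lt_iff₀ hn0).mpr (by linarith)
      linarith
    refine max_le hL1 ?_
    have hpdf : p = (p - (k:ℝ)/(n:ℝ)) + (k:ℝ)/(n:ℝ) := by ring
    have haux := auxC p ((k:ℝ)/(n:ℝ)) (p - (k:ℝ)/(n:ℝ)) (n:ℝ) s hn' hfge hd hp1 hpdf hs0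
      (by rw [hs2]; field_simp)
    have hrew : (1:ℝ) - (n:ℝ)*(p - (k:ℝ)/(n:ℝ)) = (k:ℝ) + 1 - p*(n:ℝ) := by
      field_simp
      ring
    rw [hLd]
    calc (1 - (k:ℝ)/(n:ℝ)) * p / (p - (k:ℝ)/(n:ℝ)) -
          ((k:ℝ)/(n:ℝ)) * p * (1 - p) * (1 - (k:ℝ)/(n:ℝ)) / ((p - (k:ℝ)/(n:ℝ)) ^ 3 * (n:ℝ))
        ≤ (1 - (n:ℝ)*(p - (k:ℝ)/(n:ℝ)) + s)/2 := haux
      _ = ((k:ℝ) + 1 - p*(n:ℝ) + s)/2 := by rw [hrew]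
  · -- p n ≤ k
    intro hpk
    have harg : (0:ℝ) ≤ 4*(1-p)*(k:ℝ)+1 := by linarith
    have hs20 : 0 ≤ Real.sqrt (4*(1-p)*(k:ℝ)+1) := Real.sqrt_nonneg _
    have hs2q : (Real.sqrt (4*(1-p)*(k:ℝ)+1))^2 = 4*(1-p)*(k:ℝ)+1 := Real.sq_sqrt harg
    have hs21 : 1 ≤ Real.sqrt (4*(1-p)*(k:ℝ)+1) := by nlinarith [hs2q, hs20, h4qk]
    have hcross : (0:ℝ) ≤ ((k:ℝ) - p*(n:ℝ)) * (Real.sqrt (4*(1-p)*(k:ℝ)+1) - 1) :=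
      mul_nonneg (by linarith) (by linarith)
    have hmain : Real.sqrt (4*(1-p)*(k:ℝ)+1) + (p*(n:ℝ) - (k:ℝ)) ≤ s := by
      nlinarith [hs2, hs0, hs20, hs21, hs2q, hcross,
        sq_nonneg (s - Real.sqrt (4*(1-p)*(k:ℝ)+1))]
    rw [hLd]
    linarith
end

section
/- Let n, k be real numbers with n ≥ 0, let 0 < p < 1, and suppose 0 ≤ k ≤ p·n. Then U(n,k,p) < 2·L(n,k,p). -/
open Real

noncomputable def V (n k p a : ℝ) : ℝ :=
  a + p * (n - k + a + 1) / (p * n + p - k + a)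

noncomputable def U (n k p : ℝ) : ℝ := ⨅ a : ℕ, V n k p (a : ℝ)

theorem U_lt_two_L (n k p : ℝ) (hn : 0 ≤ n) (hp0 : 0 < p) (hp1 : p < 1)
    (hk0 : 0 ≤ k) (hk : k ≤ p * n) :
    U n k p < 2 * L n k p := by
  set s : ℝ := Real.sqrt ((p * n - k + 1) ^ 2 + 4 * (1 - p) * k) with hs
  have harg : (0:ℝ) ≤ (p * n - k + 1) ^ 2 + 4 * (1 - p) * k := by
    have := sq_nonneg (p * n - k + 1)
    nlinarith
  have hs2 : s ^ 2 = (p * n - k + 1) ^ 2 + 4 * (1 - p) * k := Real.sq_sqrt harg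
  have hs0 : 0 ≤ s := Real.sqrt_nonneg _
  have hs1 : p * n - k + 1 ≤ s := by nlinarith [hs2, hs0, sq_nonneg (s - (p*n-k+1))]
  have hLdef : L n k p = (k + 1 - p * n + s) / 2 := rfl
  have hL1 : 1 ≤ L n k p := by rw [hLdef]; linarith
  have hL0 : 0 ≤ L n k p := by linarith
  set a : ℝ := (⌊L n k p⌋₊ : ℝ) with hadef
  have ha0 : 0 ≤ a := by positivity
  have ha1 : a ≤ L n k p := Nat.floor_le hL0
  have ha2 : L n k p < a + 1 := Nat.lt_floor_add_one _
  have hkn : k ≤ n := by nlinarith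
  have hden : 0 < p * n + p - k + a := by linarith
  -- V(a) < 2L
  have hVa : V n k p a < 2 * L n k p := by
    have key : p * (n - k + a + 1) < (2 * L n k p - a) * (p * n + p - k + a) := by
      have h1 : 0 ≤ (L n k p - a) * (p * n + p - k) := by
        apply mul_nonneg (by linarith) (by linarith)
      have h2 : 0 < (a + 1 - L n k p) * (L n k p - a + 1 - p) := by
        apply mul_pos (by linarith) (by linarith)
      nlinarith [hs2, h1, h2, hL1]
    have : p * (n - k + a + 1) / (p * n + p - k + a) < 2 * L n k p - a := by
      rw [div_lt_iff₀ hden]; linarith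
    unfold V; linarith
  -- U ≤ V(a)
  have hbdd : BddBelow (Set.range fun m : ℕ => V n k p (m : ℝ)) := by
    refine ⟨0, ?_⟩
    rintro x ⟨m, rfl⟩
    have hm0 : (0:ℝ) ≤ (m:ℝ) := Nat.cast_nonneg m
    have hd : 0 < p * n + p - k + (m:ℝ) := by linarith
    have hnum : 0 ≤ p * (n - k + (m:ℝ) + 1) := by
      apply mul_nonneg hp0.le; linarith
    have := div_nonneg hnum hd.le
    simp only [V]
    linarith
  have hU : U n k p ≤ V n k p a := by
    have := ciInf_le hbdd (⌊L n k p⌋₊)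
    simpa [U, hadef] using this
  linarith
end

section
/- Let n > 0 be a real number and 0 ≤ f < p < 1 with q = 1 - p. Then max{1, (1-f)·p/(p-f) - f·p·q·(1-f)/((p-f)³·n)} ≤ L(n,f·n,p) ≤ (1-f)·p/(p-f), and both inequalities are strict when f > 0. Moreover, for 0 < f, p < 1 the function n ↦ L(n,f·n,p) is strictly increasing and strictly concave on (0,∞). -/
open Real

private lemma sqrt_le_of_sq {a b : ℝ} (hb : 0 ≤ b) (h : a ≤ b ^ 2) : Real.sqrt a ≤ b := by
  calc Real.sqrt a ≤ Real.sqrt (b^2) := Real.sqrt_le_sqrt h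
  _ = b := Real.sqrt_sq hb

private lemma sqrt_lt_of_sq {a b : ℝ} (hb : 0 ≤ b) (ha : 0 ≤ a) (h : a < b ^ 2) :
    Real.sqrt a < b := by
  calc Real.sqrt a < Real.sqrt (b^2) := Real.sqrt_lt_sqrt ha h
  _ = b := Real.sqrt_sq hb

private lemma le_sqrt_of_sq {a b : ℝ} (h : b ^ 2 ≤ a) : b ≤ Real.sqrt a := by
  rcases le_or_gt b 0 with hb | hb
  · exact hb.trans (Real.sqrt_nonneg a)
  · calc b = Real.sqrt (b^2) := (Real.sqrt_sq hb.le).symm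
    _ ≤ Real.sqrt a := Real.sqrt_le_sqrt h

private lemma lt_sqrt_of_sq {a b : ℝ} (h : b ^ 2 < a) : b < Real.sqrt a := by
  rcases le_or_gt b 0 with hb | hb
  · exact lt_of_le_of_lt hb (Real.sqrt_pos.mpr (lt_of_le_of_lt (sq_nonneg b) h))
  · calc b = Real.sqrt (b^2) := (Real.sqrt_sq hb.le).symm
    _ < Real.sqrt a := Real.sqrt_lt_sqrt (sq_nonneg b) h

private lemma key_sqb {b c m : ℝ} (hc : 0 < c) (hb2 : b^2 < c^2) (hm : 0 < m) :
    b * Real.sqrt (b^2*m^2 + 2*c*m + 1) < b^2*m + c := by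
  have hu : 0 < b^2*m^2 + 2*c*m + 1 := by nlinarith [sq_nonneg (b*m), mul_pos hc hm]
  rcases le_or_gt b 0 with hb | hb
  · have h1 : b * Real.sqrt (b^2*m^2 + 2*c*m + 1) ≤ 0 :=
      mul_nonpos_of_nonpos_of_nonneg hb (Real.sqrt_nonneg _)
    nlinarith [sq_nonneg (b*m)]
  · have hs := Real.sq_sqrt hu.le
    by_contra hcon
    push_neg at hcon
    have hpos : 0 < b^2*m + c := by nlinarith [mul_pos (mul_pos hb hb) hm]
    have h2 := pow_le_pow_left₀ hpos.le hcon 2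
    nlinarith [hs]

private lemma upos {b c : ℝ} (m : ℝ) (hc : 0 < c) (hm : 0 < m) :
    0 < b^2*m^2 + 2*c*m + 1 := by
  nlinarith [sq_nonneg (b*m), mul_pos hc hm]

private lemma key_mc (b c : ℝ) (hc : 0 < c) (hb2 : b^2 < c^2) :
    StrictMonoOn (fun m : ℝ => (1 - b * m + Real.sqrt (b^2*m^2 + 2*c*m + 1)) / 2) (Set.Ioi 0) ∧
    StrictConcaveOn ℝ (Set.Ioi 0)
      (fun m : ℝ => (1 - b * m + Real.sqrt (b^2*m^2 + 2*c*m + 1)) / 2) := by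
  constructor
  · intro x hx y hy hxy
    simp only [Set.mem_Ioi] at hx hy
    simp only
    have hux := upos (b := b) x hc hx
    have huy := upos (b := b) y hc hy
    have sx := Real.sq_sqrt hux.le
    have sy := Real.sq_sqrt huy.le
    have hsx : 0 < Real.sqrt (b^2*x^2 + 2*c*x + 1) := Real.sqrt_pos.mpr hux
    have hsy : 0 < Real.sqrt (b^2*y^2 + 2*c*y + 1) := Real.sqrt_pos.mpr huy
    have hkx := key_sqb hc hb2 hx
    have hky := key_sqb hc hb2 hy
    have h1 : (Real.sqrt (b^2*y^2 + 2*c*y + 1) - Real.sqrt (b^2*x^2 + 2*c*x + 1))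
        * (Real.sqrt (b^2*y^2 + 2*c*y + 1) + Real.sqrt (b^2*x^2 + 2*c*x + 1))
        = (y - x) * (b^2*(x+y) + 2*c) := by linear_combination sy - sx
    have h2 : b*(y-x) * (Real.sqrt (b^2*y^2 + 2*c*y + 1) + Real.sqrt (b^2*x^2 + 2*c*x + 1))
        < (y - x) * (b^2*(x+y) + 2*c) := by
      nlinarith [mul_lt_mul_of_pos_left (add_lt_add hky hkx) (sub_pos.mpr hxy)]
    have h3 : b*(y-x) < Real.sqrt (b^2*y^2 + 2*c*y + 1) - Real.sqrt (b^2*x^2 + 2*c*x + 1) := by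
      have hpos := add_pos hsy hsx
      rw [← h1] at h2
      exact lt_of_mul_lt_mul_right h2 hpos.le
    linarith
  · refine ⟨convex_Ioi 0, ?_⟩
    intro x hx y hy hxy t s ht hs hts
    simp only [Set.mem_Ioi] at hx hy
    simp only [smul_eq_mul]
    have hux := upos (b := b) x hc hx
    have huy := upos (b := b) y hc hy
    have sx := Real.sq_sqrt hux.le
    have sy := Real.sq_sqrt huy.le
    have hz : 0 < t*x + s*y := by positivity
    have huz := upos (b := b) _ hc hz
    have hw : 0 < b^2*x*y + c*(x+y) + 1 := by
      nlinarith [mul_pos hx hy, sq_nonneg b, mul_pos hc (add_pos hx hy)]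
    have hxysq : 0 < (x - y)^2 := by
      have h := sub_ne_zero.mpr hxy
      exact lt_of_le_of_ne (sq_nonneg _) (Ne.symm (pow_ne_zero 2 h))
    have hww : (b^2*x^2 + 2*c*x + 1) * (b^2*y^2 + 2*c*y + 1) < (b^2*x*y + c*(x+y) + 1)^2 := by
      nlinarith [mul_pos (sub_pos.mpr hb2) hxysq]
    have hsm : Real.sqrt (b^2*x^2 + 2*c*x + 1) * Real.sqrt (b^2*y^2 + 2*c*y + 1)
        < b^2*x*y + c*(x+y) + 1 := by
      rw [← Real.sqrt_mul hux.le]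
      exact sqrt_lt_of_sq hw.le (mul_nonneg hux.le huy.le) hww
    have hzid : b^2*(t*x+s*y)^2 + 2*c*(t*x+s*y) + 1
        = t^2*(b^2*x^2 + 2*c*x + 1) + s^2*(b^2*y^2 + 2*c*y + 1)
          + 2*t*s*(b^2*x*y + c*(x+y) + 1) := by
      have hs' : s = 1 - t := by linarith
      subst hs'; ring
    have hmain : t * Real.sqrt (b^2*x^2 + 2*c*x + 1) + s * Real.sqrt (b^2*y^2 + 2*c*y + 1)
        < Real.sqrt (b^2*(t*x+s*y)^2 + 2*c*(t*x+s*y) + 1) := by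
      apply lt_sqrt_of_sq
      rw [hzid]
      have ex : (t * Real.sqrt (b^2*x^2 + 2*c*x + 1) + s * Real.sqrt (b^2*y^2 + 2*c*y + 1))^2
          = t^2*(b^2*x^2 + 2*c*x + 1) + s^2*(b^2*y^2 + 2*c*y + 1)
            + 2*t*s*(Real.sqrt (b^2*x^2 + 2*c*x + 1) * Real.sqrt (b^2*y^2 + 2*c*y + 1)) := by
        linear_combination t^2 * sx + s^2 * sy
      rw [ex]
      nlinarith [mul_lt_mul_of_pos_left hsm (by positivity : (0:ℝ) < 2*t*s)]
    linarith

set_option maxHeartbeats 1000000 in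
private lemma lb_case {n f p : ℝ} (hn : 0 < n) (hf0 : 0 ≤ f) (hfp : f < p) (hp1 : p < 1)
    (hcase : 1 < (1 - f) * p / (p - f) - f * p * (1 - p) * (1 - f) / ((p - f) ^ 3 * n)) :
    (1 - f) * p / (p - f) - f * p * (1 - p) * (1 - f) / ((p - f) ^ 3 * n) ≤ L n (f*n) p ∧
    (0 < f →
      (1 - f) * p / (p - f) - f * p * (1 - p) * (1 - f) / ((p - f) ^ 3 * n) < L n (f*n) p) := by
  have ha : 0 < p - f := by linarith
  have hp0 : 0 < p := lt_of_le_of_lt hf0 hfp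
  have hq : 0 < 1 - p := by linarith
  have hf1 : 0 < 1 - f := by linarith
  have hA3 : 0 < (p-f)^3*n := by positivity
  set X := (1 - f) * p / (p - f) - f * p * (1 - p) * (1 - f) / ((p - f) ^ 3 * n) with hX
  have hXr : X = ((1-f)*p*(p-f)^2*n - f*p*(1-p)*(1-f))/((p-f)^3*n) := by
    rw [hX]; field_simp
  clear_value X
  have hLdef : L n (f*n) p
      = (f*n + 1 - p*n + Real.sqrt ((p*n - f*n + 1)^2 + 4*(1-p)*(f*n)))/2 := rfl
  have hc2 : f*p*(1-p)*(1-f) < ((1-f)*p - (p-f))*(p-f)^2*n := by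
    rw [hXr, lt_div_iff₀ hA3] at hcase
    nlinarith [hcase]
  have hB'eq : 2*X - 1 - f*n + p*n
      = (2*(1-f)*p*(p-f)^2*n - 2*f*p*(1-p)*(1-f) - (p-f)^3*n + (p-f)^4*n^2)/((p-f)^3*n) := by
    rw [hXr]; field_simp; ring
  have hCnum : 0 ≤ f*p*(1-p)*(1-f) := by positivity
  have hTC : f*p*(1-p)*(1-f) < (2*(1-f)*p - (p-f))*(p-f)^2*n := by
    nlinarith [hc2, mul_pos (mul_pos (mul_pos hf1 hp0) (by positivity : (0:ℝ) < (p-f)^2)) hn]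
  constructor
  · have hpoly : (2*(1-f)*p*(p-f)^2*n - 2*f*p*(1-p)*(1-f) - (p-f)^3*n + (p-f)^4*n^2)^2
        ≤ ((p*n - f*n + 1)^2 + 4*(1-p)*(f*n)) * ((p-f)^3*n)^2 := by
      nlinarith [mul_nonneg hCnum (sub_nonneg.mpr hTC.le)]
    have hkey : 2*X - 1 - f*n + p*n ≤ Real.sqrt ((p*n - f*n + 1)^2 + 4*(1-p)*(f*n)) := by
      apply le_sqrt_of_sq
      rw [hB'eq, div_pow, div_le_iff₀ (by positivity)]
      exact hpoly
    rw [hLdef]; linarith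
  · intro hf
    have hCnum' : 0 < f*p*(1-p)*(1-f) := by positivity
    have hpoly' : (2*(1-f)*p*(p-f)^2*n - 2*f*p*(1-p)*(1-f) - (p-f)^3*n + (p-f)^4*n^2)^2
        < ((p*n - f*n + 1)^2 + 4*(1-p)*(f*n)) * ((p-f)^3*n)^2 := by
      nlinarith [mul_pos hCnum' (sub_pos.mpr hTC)]
    have hkey : 2*X - 1 - f*n + p*n < Real.sqrt ((p*n - f*n + 1)^2 + 4*(1-p)*(f*n)) := by
      apply lt_sqrt_of_sq
      rw [hB'eq, div_pow, div_lt_iff₀ (by positivity)]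
      exact hpoly'
    rw [hLdef]; linarith

theorem L_along_fn_bounds
    (n f p : ℝ) (hn : 0 < n) (hf0 : 0 ≤ f) (hfp : f < p) (hp1 : p < 1) :
    (max 1 ((1 - f) * p / (p - f) - f * p * (1 - p) * (1 - f) / ((p - f) ^ 3 * n))
        ≤ L n (f * n) p ∧
      L n (f * n) p ≤ (1 - f) * p / (p - f)) ∧
    (0 < f →
      max 1 ((1 - f) * p / (p - f) - f * p * (1 - p) * (1 - f) / ((p - f) ^ 3 * n))
          < L n (f * n) p ∧
        L n (f * n) p < (1 - f) * p / (p - f)) ∧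
    (∀ f' p' : ℝ, 0 < f' → f' < 1 → 0 < p' → p' < 1 →
      StrictMonoOn (fun m : ℝ => L m (f' * m) p') (Set.Ioi 0) ∧
      StrictConcaveOn ℝ (Set.Ioi 0) (fun m : ℝ => L m (f' * m) p')) := by
  have ha : 0 < p - f := by linarith
  have hp0 : 0 < p := lt_of_le_of_lt hf0 hfp
  have hq : 0 < 1 - p := by linarith
  have hf1 : 0 < 1 - f := by linarith
  have hLdef : L n (f*n) p
      = (f*n + 1 - p*n + Real.sqrt ((p*n - f*n + 1)^2 + 4*(1-p)*(f*n)))/2 := rfl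
  have hD0 : 0 ≤ (p*n - f*n + 1)^2 + 4*(1-p)*(f*n) := by
    nlinarith [sq_nonneg (p*n - f*n + 1), mul_nonneg (mul_nonneg hq.le hf0) hn.le]
  -- L ≥ 1
  have h1 : 1 ≤ L n (f*n) p := by
    have hkey : 1 + (p-f)*n ≤ Real.sqrt ((p*n - f*n + 1)^2 + 4*(1-p)*(f*n)) := by
      apply le_sqrt_of_sq
      nlinarith [mul_nonneg (mul_nonneg hq.le hf0) hn.le]
    rw [hLdef]; nlinarith [mul_pos ha hn]
  have hs1 : 0 < f → 1 < L n (f*n) p := by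
    intro hf
    have hkey : 1 + (p-f)*n < Real.sqrt ((p*n - f*n + 1)^2 + 4*(1-p)*(f*n)) := by
      apply lt_sqrt_of_sq
      nlinarith [mul_pos (mul_pos hq hf) hn]
    rw [hLdef]; nlinarith [mul_pos ha hn]
  -- upper bound material
  have hBnn : 0 ≤ ((p + f - 2*p*f) + (p-f)^2*n)/(p-f) := by
    apply div_nonneg _ ha.le
    nlinarith [mul_pos hp0 hf1, mul_nonneg hf0 hq.le, mul_nonneg (sq_nonneg (p-f)) hn.le]
  have heqB : ((p + f - 2*p*f) + (p-f)^2*n)/(p-f) = 2*((1-f)*p/(p-f)) - 1 - f*n + p*n := by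
    field_simp; ring
  have hub : L n (f*n) p ≤ (1 - f) * p / (p - f) := by
    have hkey : Real.sqrt ((p*n - f*n + 1)^2 + 4*(1-p)*(f*n))
        ≤ ((p + f - 2*p*f) + (p-f)^2*n)/(p-f) := by
      apply sqrt_le_of_sq hBnn
      rw [div_pow, le_div_iff₀ (by positivity)]
      nlinarith [mul_nonneg (mul_nonneg (mul_nonneg hf0 hp0.le) hq.le) hf1.le]
    rw [heqB] at hkey
    rw [hLdef]; linarith
  have hubs : 0 < f → L n (f*n) p < (1 - f) * p / (p - f) := by
    intro hf
    have hkey : Real.sqrt ((p*n - f*n + 1)^2 + 4*(1-p)*(f*n))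
        < ((p + f - 2*p*f) + (p-f)^2*n)/(p-f) := by
      apply sqrt_lt_of_sq hBnn hD0
      rw [div_pow, lt_div_iff₀ (by positivity)]
      nlinarith [mul_pos (mul_pos (mul_pos hf hp0) hq) hf1]
    rw [heqB] at hkey
    rw [hLdef]; linarith
  refine ⟨⟨?_, hub⟩, ?_, ?_⟩
  · rcases le_or_gt ((1 - f) * p / (p - f) - f * p * (1 - p) * (1 - f) / ((p - f) ^ 3 * n)) 1
      with hc | hc
    · rw [max_eq_left hc]; exact h1
    · rw [max_eq_right hc.le]; exact (lb_case hn hf0 hfp hp1 hc).1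
  · intro hf
    refine ⟨?_, hubs hf⟩
    rcases le_or_gt ((1 - f) * p / (p - f) - f * p * (1 - p) * (1 - f) / ((p - f) ^ 3 * n)) 1
      with hc | hc
    · rw [max_eq_left hc]; exact hs1 hf
    · rw [max_eq_right hc.le]; exact (lb_case hn hf0 hfp hp1 hc).2 hf
  · intro f' p' hf'0 hf'1 hp'0 hp'1
    have hc0 : 0 < (p' - f') + 2*(1-p')*f' := by
      nlinarith [mul_pos hp'0 (sub_pos.mpr hf'1), mul_pos hf'0 (sub_pos.mpr hp'1)]
    have hb2 : (p'-f')^2 < ((p' - f') + 2*(1-p')*f')^2 := by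
      nlinarith [mul_pos (mul_pos (mul_pos (sub_pos.mpr hp'1) hf'0) hp'0) (sub_pos.mpr hf'1)]
    have heq : (fun m : ℝ => L m (f'*m) p')
        = (fun m : ℝ => (1 - (p'-f') * m
            + Real.sqrt ((p'-f')^2*m^2 + 2*((p' - f') + 2*(1-p')*f')*m + 1)) / 2) := by
      funext m
      show (f'*m + 1 - p'*m + Real.sqrt ((p'*m - f'*m + 1)^2 + 4*(1-p')*(f'*m)))/2 = _
      rw [show (p'*m - f'*m + 1)^2 + 4*(1-p')*(f'*m)
          = (p'-f')^2*m^2 + 2*((p' - f') + 2*(1-p')*f')*m + 1 from by ring]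
      ring
    rw [heq]
    exact key_mc _ _ hc0 hb2
end

section
/- Let k, n be positive integers with k ≤ p·n and 0 < p < 1. Then 1/(e·√k) < L(n,k,p)/(e·√k) ≤ (k^k·L(n,k,p))/(e^k·k!) < B_{n,k}(p)·e^{n·D(k/n‖p)} < √(n/(n-k))·(k^k·U(n,k,p))/(e^k·k!). -/
open Real

/-- Relative entropy `D(f‖p)`. -/
noncomputable def D (f p : ℝ) : ℝ :=
  f * Real.log (f / p) + (1 - f) * Real.log ((1 - f) / (1 - p))

/-- ratio sequence: `cs k m p j = b_{n,k-j}(p)/b_{n,k}(p)` with `n = k+m`. -/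
noncomputable def cs (k m : ℕ) (p : ℝ) : ℕ → ℝ
  | 0 => 1
  | j + 1 => cs k m p j * ((1 - p) * ((k : ℝ) - j) / (p * ((m : ℝ) + j + 1)))

/-- the ratio at step j -/
noncomputable def rho (k m : ℕ) (p : ℝ) (j : ℕ) : ℝ :=
  (1 - p) * ((k : ℝ) - j) / (p * ((m : ℝ) + j + 1))

lemma cs_succ (k m : ℕ) (p : ℝ) (j : ℕ) :
    cs k m p (j+1) = cs k m p j * rho k m p j := rfl

lemma cs_zero (k m : ℕ) (p : ℝ) : cs k m p 0 = 1 := rfl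

lemma rho_denom_pos (k m : ℕ) {p : ℝ} (hp0 : 0 < p) (j : ℕ) :
    0 < p * ((m : ℝ) + j + 1) := by positivity

lemma rho_nonneg (k m : ℕ) {p : ℝ} (hp0 : 0 < p) (hp1 : p < 1) {j : ℕ} (hj : j ≤ k) :
    0 ≤ rho k m p j := by
  have h1 : (0:ℝ) ≤ (k:ℝ) - j := by
    have := Nat.cast_le (α := ℝ).2 hj; linarith
  have h2 := rho_denom_pos k m hp0 j
  have hq : (0:ℝ) ≤ 1 - p := by linarith
  unfold rho
  exact div_nonneg (mul_nonneg hq h1) h2.le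

lemma rho_zero_lt_one (k m : ℕ) {p : ℝ} (hk : 0 < k) (hp0 : 0 < p) (hp1 : p < 1)
    (hkp : (k : ℝ) ≤ p * (k + m)) : rho k m p 0 < 1 := by
  unfold rho
  rw [div_lt_one (rho_denom_pos k m hp0 0)]
  have h1 : (1-p) * k ≤ (1-p) * (p * (k+m)) := by nlinarith
  push_cast
  nlinarith

lemma rho_anti (k m : ℕ) {p : ℝ} (hp0 : 0 < p) (hp1 : p < 1) {i j : ℕ}
    (hij : i ≤ j) (hi : i ≤ k) : rho k m p j ≤ rho k m p i := by
  unfold rho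
  rw [div_le_div_iff₀ (rho_denom_pos k m hp0 j) (rho_denom_pos k m hp0 i)]
  have hij' : (i:ℝ) ≤ (j:ℝ) := by exact_mod_cast hij
  have hi' : (i:ℝ) ≤ (k:ℝ) := by exact_mod_cast hi
  have hq : (0:ℝ) ≤ 1 - p := by linarith
  nlinarith [mul_nonneg (mul_nonneg hq (sub_nonneg.2 hij')) hp0.le]

lemma rho_lt_one (k m : ℕ) {p : ℝ} (hk : 0 < k) (hp0 : 0 < p) (hp1 : p < 1)
    (hkp : (k : ℝ) ≤ p * (k + m)) (j : ℕ) : rho k m p j < 1 :=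
  lt_of_le_of_lt (rho_anti k m hp0 hp1 (Nat.zero_le j) (Nat.zero_le k))
    (rho_zero_lt_one k m hk hp0 hp1 hkp)

lemma cs_pos (k m : ℕ) {p : ℝ} (hp0 : 0 < p) (hp1 : p < 1) {j : ℕ} (hj : j ≤ k) :
    0 < cs k m p j := by
  induction j with
  | zero => norm_num [cs]
  | succ i ih =>
    have hik : i ≤ k := Nat.le_of_succ_le hj
    have h1 := ih hik
    rw [cs_succ]
    have hr : 0 < rho k m p i := by
      unfold rho
      have h2 : (0:ℝ) < (k:ℝ) - i := by
        have : (i:ℝ) < (k:ℝ) := by exact_mod_cast hj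
        linarith
      have h3 := rho_denom_pos k m hp0 i
      have hq : (0:ℝ) < 1 - p := by linarith
      exact div_pos (mul_pos hq h2) h3
    positivity

lemma cs_nonneg (k m : ℕ) {p : ℝ} (hp0 : 0 < p) (hp1 : p < 1) {j : ℕ} (hj : j ≤ k) :
    0 ≤ cs k m p j := le_of_lt (cs_pos k m hp0 hp1 hj)

lemma cs_le_one (k m : ℕ) {p : ℝ} (hk : 0 < k) (hp0 : 0 < p) (hp1 : p < 1)
    (hkp : (k : ℝ) ≤ p * (k + m)) {j : ℕ} (hj : j ≤ k) : cs k m p j ≤ 1 := by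
  induction j with
  | zero => norm_num [cs]
  | succ i ih =>
    have hik : i ≤ k := Nat.le_of_succ_le hj
    rw [cs_succ]
    have h1 := ih hik
    have h2 := cs_nonneg k m hp0 hp1 hik
    have h3 := rho_nonneg k m hp0 hp1 hik
    have h4 := rho_lt_one k m hk hp0 hp1 hkp i
    nlinarith

lemma cs_logconcave (k m : ℕ) {p : ℝ} (hp0 : 0 < p) (hp1 : p < 1) {i j : ℕ}
    (hij : i + j ≤ k) : cs k m p (i + j) ≤ cs k m p i * cs k m p j := by
  induction j with
  | zero => simp [cs_zero]
  | succ t ih =>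
    have h1 : i + t ≤ k := by omega
    have h2 : t ≤ k := by omega
    have ih' := ih h1
    have hr1 : 0 ≤ rho k m p (i + t) := rho_nonneg k m hp0 hp1 h1
    have hr2 : rho k m p (i + t) ≤ rho k m p t :=
      rho_anti k m hp0 hp1 (Nat.le_add_left t i) h2
    have hc : 0 ≤ cs k m p (i + t) := cs_nonneg k m hp0 hp1 h1
    have hci : 0 ≤ cs k m p i := cs_nonneg k m hp0 hp1 (by omega)
    have hct : 0 ≤ cs k m p t := cs_nonneg k m hp0 hp1 h2
    have : i + (t + 1) = (i + t) + 1 := by omega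
    rw [this, cs_succ, cs_succ]
    calc cs k m p (i + t) * rho k m p (i + t)
        ≤ (cs k m p i * cs k m p t) * rho k m p (i + t) := by
          exact mul_le_mul_of_nonneg_right ih' hr1
      _ ≤ (cs k m p i * cs k m p t) * rho k m p t := by
          exact mul_le_mul_of_nonneg_left hr2 (mul_nonneg hci hct)
      _ = cs k m p i * (cs k m p t * rho k m p t) := by ring

lemma cs_tail (k m : ℕ) {p : ℝ} (hk : 0 < k) (hp0 : 0 < p) (hp1 : p < 1)
    (hkp : (k : ℝ) ≤ p * (k + m)) {a i : ℕ} (h : a + i ≤ k) :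
    cs k m p (a + i) ≤ rho k m p a ^ i := by
  induction i with
  | zero => simpa using cs_le_one k m hk hp0 hp1 hkp (j := a) (by omega)
  | succ t ih =>
    have h1 : a + t ≤ k := by omega
    have ih' := ih h1
    have : a + (t + 1) = (a + t) + 1 := by omega
    rw [this, cs_succ]
    have hr1 : 0 ≤ rho k m p (a + t) := rho_nonneg k m hp0 hp1 h1
    have hr2 : rho k m p (a + t) ≤ rho k m p a :=
      rho_anti k m hp0 hp1 (Nat.le_add_right a t) (by omega)
    have hc : 0 ≤ cs k m p (a + t) := cs_nonneg k m hp0 hp1 h1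
    calc cs k m p (a + t) * rho k m p (a + t)
        ≤ rho k m p a ^ t * rho k m p a :=
          mul_le_mul ih' hr2 hr1 (pow_nonneg (rho_nonneg k m hp0 hp1 (by omega)) t)
      _ = rho k m p a ^ (t + 1) := by ring

noncomputable def Ssum (k m : ℕ) (p : ℝ) : ℝ := ∑ j ∈ Finset.range (k+1), cs k m p j

lemma Ssum_ge_one (k m : ℕ) {p : ℝ} (hp0 : 0 < p) (hp1 : p < 1) : 1 ≤ Ssum k m p := by
  have h0 : (0:ℕ) ∈ Finset.range (k+1) := by simp
  have := Finset.single_le_sum (f := cs k m p)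
    (fun i hi => cs_nonneg k m hp0 hp1 (by simpa using Nat.lt_succ_iff.mp (Finset.mem_range.mp hi)))
    h0
  simpa [cs_zero, Ssum] using this

lemma sum_jc_eq (k m : ℕ) {p : ℝ} (hp0 : 0 < p) :
    ∑ j ∈ Finset.range (k+1), (j:ℝ) * cs k m p j
      = (1-p) * k * Ssum k m p - p * m * (Ssum k m p - 1) := by
  have hrec : ∀ j : ℕ, (1-p)*((k:ℝ)-j) * cs k m p j = p*((m:ℝ)+j+1) * cs k m p (j+1) := by
    intro j
    rw [cs_succ, rho]
    have hd : p*((m:ℝ)+j+1) ≠ 0 := ne_of_gt (rho_denom_pos k m hp0 j)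
    field_simp
  have h1 : ∑ j ∈ Finset.range (k+1), (1-p)*((k:ℝ)-j) * cs k m p j
      = ∑ j ∈ Finset.range (k+1), p*((m:ℝ)+j) * cs k m p j - p * m := by
    rw [Finset.sum_range_succ (fun j => (1-p)*((k:ℝ)-j) * cs k m p j) k]
    rw [Finset.sum_range_succ' (fun j => p*((m:ℝ)+j) * cs k m p j) k]
    have e1 : (1-p)*((k:ℝ)-(k:ℕ)) * cs k m p k = 0 := by simp
    rw [e1, add_zero]
    have e2 : ∀ j ∈ Finset.range k,
        (1-p)*((k:ℝ)-j) * cs k m p j = p*((m:ℝ)+(j+1:ℕ)) * cs k m p (j+1) := by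
      intro j _
      push_cast
      rw [hrec j]
      ring_nf
    rw [Finset.sum_congr rfl e2]
    simp [cs_zero]
  have e3 : ∑ j ∈ Finset.range (k+1), (1-p)*((k:ℝ)-j) * cs k m p j
      = (1-p)*k * Ssum k m p - (1-p) * ∑ j ∈ Finset.range (k+1), (j:ℝ) * cs k m p j := by
    rw [Ssum, Finset.mul_sum, Finset.mul_sum, ← Finset.sum_sub_distrib]
    exact Finset.sum_congr rfl (fun j _ => by ring)
  have e4 : ∑ j ∈ Finset.range (k+1), p*((m:ℝ)+j) * cs k m p j
      = p*m * Ssum k m p + p * ∑ j ∈ Finset.range (k+1), (j:ℝ) * cs k m p j := by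
    rw [Ssum, Finset.mul_sum, Finset.mul_sum, ← Finset.sum_add_distrib]
    exact Finset.sum_congr rfl (fun j _ => by ring)
  rw [e3, e4] at h1
  linarith

lemma conv_bound (k m : ℕ) {p : ℝ} (hp0 : 0 < p) (hp1 : p < 1) :
    ∑ j ∈ Finset.range (k+1), (j:ℝ) * cs k m p j
      ≤ (Ssum k m p - 1) * Ssum k m p := by
  classical
  have hS1 : Ssum k m p - 1 = ∑ j ∈ Finset.Ico 1 (k+1), cs k m p j := by
    have : Ssum k m p = ∑ j ∈ Finset.Ico 0 (k+1), cs k m p j := by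
      rw [Ssum, Finset.range_eq_Ico]
    rw [this, Finset.sum_eq_sum_Ico_succ_bot (by omega) (cs k m p), cs_zero]
    ring
  have h0 : ∑ j ∈ Finset.range (k+1), (j:ℝ) * cs k m p j
      = ∑ s ∈ Finset.Ico 1 (k+1), (s:ℝ) * cs k m p s := by
    rw [Finset.range_eq_Ico, Finset.sum_eq_sum_Ico_succ_bot (by omega)]
    simp
  rw [h0, hS1]
  -- step: s * cs s = ∑_{j ∈ Ico 1 (s+1)} cs s ≤ ∑_{j ∈ Ico 1 (s+1)} cs (s-j) * cs j
  have step : ∀ s ∈ Finset.Ico 1 (k+1),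
      (s:ℝ) * cs k m p s ≤ ∑ j ∈ Finset.Ico 1 (s+1), cs k m p (s-j) * cs k m p j := by
    intro s hs
    rw [Finset.mem_Ico] at hs
    have hsk : s ≤ k := by omega
    have hconst : (s:ℝ) * cs k m p s = ∑ _j ∈ Finset.Ico 1 (s+1), cs k m p s := by
      rw [Finset.sum_const, Nat.card_Ico]
      simp [nsmul_eq_mul]
    rw [hconst]
    apply Finset.sum_le_sum
    intro j hj
    rw [Finset.mem_Ico] at hj
    have hjs : j ≤ s := by omega
    have : (s - j) + j = s := by omega
    calc cs k m p s = cs k m p ((s-j)+j) := by rw [this]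
      _ ≤ cs k m p (s-j) * cs k m p j := cs_logconcave k m hp0 hp1 (by omega)
  calc ∑ s ∈ Finset.Ico 1 (k+1), (s:ℝ) * cs k m p s
      ≤ ∑ s ∈ Finset.Ico 1 (k+1), ∑ j ∈ Finset.Ico 1 (s+1), cs k m p (s-j) * cs k m p j :=
        Finset.sum_le_sum step
    _ = ∑ j ∈ Finset.Ico 1 (k+1), ∑ s ∈ Finset.Ico j (k+1), cs k m p (s-j) * cs k m p j := by
        apply Finset.sum_comm'
        intro s j
        simp only [Finset.mem_Ico]
        omega
    _ ≤ ∑ j ∈ Finset.Ico 1 (k+1), cs k m p j * Ssum k m p := by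
        apply Finset.sum_le_sum
        intro j hj
        rw [Finset.mem_Ico] at hj
        have h1 : ∑ s ∈ Finset.Ico j (k+1), cs k m p (s-j) * cs k m p j
            = (∑ s ∈ Finset.Ico j (k+1), cs k m p (s-j)) * cs k m p j := by
          rw [Finset.sum_mul]
        rw [h1]
        have h2 : ∑ s ∈ Finset.Ico j (k+1), cs k m p (s-j)
            = ∑ i ∈ Finset.range (k+1-j), cs k m p i := by
          rw [Finset.sum_Ico_eq_sum_range]
          exact Finset.sum_congr rfl (fun i _ => by congr 1; omega)
        have h3 : ∑ i ∈ Finset.range (k+1-j), cs k m p i ≤ Ssum k m p := by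
          rw [Ssum]
          apply Finset.sum_le_sum_of_subset_of_nonneg
          · exact Finset.range_subset_range.2 (by omega)
          · intro i hi _
            exact cs_nonneg k m hp0 hp1 (by simpa using Nat.lt_succ_iff.mp (Finset.mem_range.mp hi))
        rw [h2]
        have hcj : 0 ≤ cs k m p j := cs_nonneg k m hp0 hp1 (by omega)
        calc (∑ i ∈ Finset.range (k+1-j), cs k m p i) * cs k m p j
            ≤ Ssum k m p * cs k m p j := mul_le_mul_of_nonneg_right h3 hcj
          _ = cs k m p j * Ssum k m p := by ring
    _ = (∑ j ∈ Finset.Ico 1 (k+1), cs k m p j) * Ssum k m p := by rw [Finset.sum_mul]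

lemma quad_bound (k m : ℕ) {p : ℝ} (hp0 : 0 < p) (hp1 : p < 1) :
    (1-p) * k ≤ (Ssum k m p - 1) * (Ssum k m p + p * (k+m) - k) := by
  have h1 := sum_jc_eq k m (p := p) hp0
  have h2 := conv_bound k m hp0 hp1
  nlinarith [h1, h2]

lemma Ssum_ge_L (k m : ℕ) {p : ℝ} (hp0 : 0 < p) (hp1 : p < 1)
    (hkp : (k : ℝ) ≤ p * (k + m)) :
    ((k:ℝ) + 1 - p * (k+m) + Real.sqrt ((p * (k+m) - k + 1) ^ 2 + 4 * (1 - p) * k)) / 2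
      ≤ Ssum k m p := by
  have hS1 : 1 ≤ Ssum k m p := Ssum_ge_one k m hp0 hp1
  have hquad := quad_bound k m hp0 hp1
  set S := Ssum k m p with hS
  have h4 : (0:ℝ) ≤ 4 * (1 - p) * k := by
    have h5 : (0:ℝ) ≤ (k:ℝ) := Nat.cast_nonneg k
    nlinarith
  have harg : (0:ℝ) ≤ (p * ((k:ℝ)+m) - k + 1) ^ 2 + 4 * (1 - p) * k :=
    add_nonneg (sq_nonneg _) h4
  have hW2 : Real.sqrt ((p * ((k:ℝ)+m) - k + 1) ^ 2 + 4 * (1 - p) * k) ^ 2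
      = (p * ((k:ℝ)+m) - k + 1) ^ 2 + 4 * (1 - p) * k := Real.sq_sqrt harg
  set W := Real.sqrt ((p * ((k:ℝ)+m) - k + 1) ^ 2 + 4 * (1 - p) * k) with hW
  have hWnn : 0 ≤ W := Real.sqrt_nonneg _
  have hy : 0 ≤ 2*S + p*((k:ℝ)+m) - k - 1 := by
    have hpn : (k:ℝ) ≤ p * ((k:ℝ)+m) := by push_cast at hkp ⊢; linarith
    linarith
  have hWy : W ≤ 2*S + p*((k:ℝ)+m) - k - 1 := by
    nlinarith [hW2, hWnn, hquad, hy]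
  have hfin : ((k:ℝ) + 1 - p * ((k:ℝ)+m) + W) / 2 ≤ S := by linarith
  convert hfin using 3 <;> push_cast <;> ring


lemma V_denom_pos (k m : ℕ) {p : ℝ} (hp0 : 0 < p) (hkp : (k : ℝ) ≤ p * (k + m)) (a : ℝ)
    (ha : 0 ≤ a) : 0 < p * ((k:ℝ)+m) + p - k + a := by
  nlinarith

lemma Ssum_head_le (k m : ℕ) {p : ℝ} (hk : 0 < k) (hp0 : 0 < p) (hp1 : p < 1)
    (hkp : (k : ℝ) ≤ p * (k + m)) {a : ℕ} (ha : a ≤ k) :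
    ∑ j ∈ Finset.range a, cs k m p j ≤ (a : ℝ) := by
  calc ∑ j ∈ Finset.range a, cs k m p j ≤ ∑ _j ∈ Finset.range a, (1:ℝ) :=
        Finset.sum_le_sum (fun j hj =>
          cs_le_one k m hk hp0 hp1 hkp (le_trans (Nat.le_of_lt_succ
            (Nat.lt_succ_of_lt (Finset.mem_range.mp hj))) ha))
    _ = (a : ℝ) := by simp

lemma Ssum_lt_V (k m : ℕ) {p : ℝ} (hk : 0 < k) (hm : 0 < m) (hp0 : 0 < p) (hp1 : p < 1)
    (hkp : (k : ℝ) ≤ p * (k + m)) {a : ℕ} (ha : a ≤ k) :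
    Ssum k m p < V ((k:ℝ)+m) k p a := by
  have hsplit : Ssum k m p = ∑ j ∈ Finset.range a, cs k m p j
      + ∑ j ∈ Finset.Ico a (k+1), cs k m p j := by
    have h := Finset.sum_Ico_consecutive (fun j => cs k m p j)
      (Nat.zero_le a) (show a ≤ k+1 by omega)
    simp only [Ssum, Finset.range_eq_Ico]
    exact h.symm
  have hhead := Ssum_head_le k m hk hp0 hp1 hkp ha
  have htail : ∑ j ∈ Finset.Ico a (k+1), cs k m p j
      ≤ ∑ i ∈ Finset.range (k+1-a), rho k m p a ^ i := by
    rw [Finset.sum_Ico_eq_sum_range]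
    apply Finset.sum_le_sum
    intro i hi
    rw [Finset.mem_range] at hi
    exact cs_tail k m hk hp0 hp1 hkp (by omega)
  have hVden : 0 < p * ((k:ℝ)+m) + p - (k:ℝ) + a :=
    V_denom_pos k m hp0 hkp a (Nat.cast_nonneg a)
  have hrd := rho_denom_pos k m hp0 a
  have hVeq : V ((k:ℝ)+m) k p a = a + 1/(1 - rho k m p a) := by
    have hr1 : 1 - rho k m p a
        = (p * ((k:ℝ)+m) + p - (k:ℝ) + a) / (p*((m:ℝ)+a+1)) := by
      rw [rho, eq_div_iff (ne_of_gt hrd)]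
      field_simp
      ring
    rw [V, hr1, one_div_div]
    ring
  have hrho1 : rho k m p a < 1 := rho_lt_one k m hk hp0 hp1 hkp a
  rcases Nat.lt_or_ge a k with hak | hak
  · -- a < k : geometric tail is strictly less than 1/(1-ρ)
    have hrho0 : 0 < rho k m p a := by
      rw [rho]
      have h1 : (0:ℝ) < (k:ℝ) - a := by
        have : (a:ℝ) < (k:ℝ) := by exact_mod_cast hak
        linarith
      have h2 : (0:ℝ) < 1 - p := by linarith
      exact div_pos (mul_pos h2 h1) hrd
    have hgeom : ∑ i ∈ Finset.range (k+1-a), rho k m p a ^ i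
        < 1/(1 - rho k m p a) := by
      rw [geom_sum_eq (ne_of_lt hrho1)]
      have hrw : (rho k m p a ^ (k+1-a) - 1)/(rho k m p a - 1)
          = (1 - rho k m p a ^ (k+1-a))/(1 - rho k m p a) := by
        rw [← neg_div_neg_eq]
        ring_nf
      rw [hrw, div_lt_div_iff₀ (by linarith) (by linarith)]
      nlinarith [pow_pos hrho0 (k+1-a)]
    rw [hsplit, hVeq]
    have := lt_of_le_of_lt htail hgeom
    linarith
  · -- a = k
    have hae : a = k := le_antisymm ha hak
    subst hae
    have hlast : ∑ j ∈ Finset.Ico a (a+1), cs a m p j = cs a m p a := by simp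
    have hck : cs a m p a < 1 := by
      have h0 : cs a m p a = cs a m p (0 + a) := by rw [Nat.zero_add]
      have h1 : cs a m p (0 + a) ≤ rho a m p 0 ^ a :=
        cs_tail a m hk hp0 hp1 hkp (by omega)
      have h2 : rho a m p 0 ^ a ≤ rho a m p 0 ^ 1 :=
        pow_le_pow_of_le_one (rho_nonneg a m hp0 hp1 (Nat.zero_le a))
          (rho_zero_lt_one a m hk hp0 hp1 hkp).le (by omega)
      have h3 : rho a m p 0 ^ 1 < 1 := by
        simpa using rho_zero_lt_one a m hk hp0 hp1 hkp
      rw [h0]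
      exact lt_of_le_of_lt h1 (lt_of_le_of_lt h2 h3)
    have hVk : V ((a:ℝ)+m) a p a = a + 1 := by
      rw [V]
      have hd : p * ((a:ℝ)+m) + p - a + a = p * ((a:ℝ)+m+1) := by ring
      have hnum : p * ((a:ℝ)+m - a + a + 1) = p * ((a:ℝ)+m+1) := by ring
      rw [hd, hnum, div_self (by positivity)]
    rw [hsplit, hVk, hlast]
    linarith [Ssum_head_le a m hk hp0 hp1 hkp (le_refl a)]

lemma V_k_eq (k m : ℕ) {p : ℝ} (hp0 : 0 < p) : V ((k:ℝ)+m) k p k = k + 1 := by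
  rw [V]
  have hd : p * ((k:ℝ)+m) + p - k + k = p * ((k:ℝ)+m+1) := by ring
  have hnum : p * ((k:ℝ)+m - k + k + 1) = p * ((k:ℝ)+m+1) := by ring
  rw [hd, hnum, div_self (by positivity)]

lemma V_gt_self (k m : ℕ) {p : ℝ} (hp0 : 0 < p) (hkp : (k : ℝ) ≤ p * (k + m))
    (a : ℝ) (ha : 0 ≤ a) : a < V ((k:ℝ)+m) k p a := by
  rw [V]
  have hnum : 0 < p * ((k:ℝ)+m - k + a + 1) := by
    have : (0:ℝ) ≤ (m:ℝ) := Nat.cast_nonneg m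
    have he : ((k:ℝ)+m - k + a + 1) = (m:ℝ) + a + 1 := by ring
    rw [he]; positivity
  have hden := V_denom_pos k m hp0 hkp a ha
  have := div_pos hnum hden
  linarith

lemma Ssum_lt_U (k m : ℕ) {p : ℝ} (hk : 0 < k) (hm : 0 < m) (hp0 : 0 < p) (hp1 : p < 1)
    (hkp : (k : ℝ) ≤ p * (k + m)) :
    Ssum k m p < U ((k:ℝ)+m) k p := by
  classical
  set F := (Finset.range (k+1)).image (fun a : ℕ => V ((k:ℝ)+m) k p a) with hF
  have hne : F.Nonempty := ⟨V ((k:ℝ)+m) k p 0, Finset.mem_image.2 ⟨0, by simp⟩⟩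
  set μ := F.min' hne with hμ
  have hμS : Ssum k m p < μ := by
    obtain ⟨a₀, ha₀, hva⟩ := Finset.mem_image.1 (F.min'_mem hne)
    rw [hμ, ← hva]
    exact Ssum_lt_V k m hk hm hp0 hp1 hkp (Nat.lt_succ_iff.mp (Finset.mem_range.mp ha₀))
  have hμV : ∀ a : ℕ, μ ≤ V ((k:ℝ)+m) k p a := by
    intro a
    rcases le_or_gt a k with hak | hak
    · exact F.min'_le _ (Finset.mem_image.2 ⟨a, Finset.mem_range.2 (by omega), rfl⟩)
    · have h1 : μ ≤ V ((k:ℝ)+m) k p k :=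
        F.min'_le _ (Finset.mem_image.2 ⟨k, Finset.mem_range.2 (by omega), rfl⟩)
      have h2 : V ((k:ℝ)+m) k p k = k + 1 := V_k_eq k m hp0
      have h3 : ((k:ℝ)+1) ≤ (a:ℝ) := by exact_mod_cast hak
      have h4 : (a:ℝ) < V ((k:ℝ)+m) k p a := V_gt_self k m hp0 hkp a (Nat.cast_nonneg a)
      linarith
  exact lt_of_lt_of_le hμS (le_ciInf hμV)

lemma b_ratio (n t : ℕ) (ht : t < n) (p : ℝ) :
    p * ((n:ℝ) - t) * b n t p = (1-p) * ((t:ℝ)+1) * b n (t+1) p := by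
  rw [b, b]
  have hc : ((n.choose (t+1) : ℕ) : ℝ) * ((t:ℝ)+1) = ((n.choose t : ℕ) : ℝ) * ((n:ℝ) - t) := by
    have := Nat.choose_succ_right_eq n t
    have h2 : ((n.choose (t+1) * (t+1) : ℕ) : ℝ) = ((n.choose t * (n - t) : ℕ) : ℝ) := by
      exact_mod_cast congrArg (Nat.cast (R := ℝ)) this
    push_cast [Nat.cast_sub ht.le] at h2
    push_cast
    linarith
  have he : n - t = (n - (t+1)) + 1 := by omega
  rw [he, pow_succ]
  linear_combination (-(p^(t+1) * (1-p)^(n-(t+1)) * (1-p))) * hc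

lemma b_shift (k m : ℕ) {p : ℝ} (hp0 : 0 < p) (hp1 : p < 1) {j : ℕ} (hj : j ≤ k) :
    b (k+m) (k-j) p = b (k+m) k p * cs k m p j := by
  induction j with
  | zero => simp [cs_zero]
  | succ i ih =>
    have hik : i ≤ k := by omega
    have ih' := ih hik
    set n := k + m with hn
    have ht : k - (i+1) < n := by omega
    have hratio := b_ratio n (k-(i+1)) (by omega) p
    have hsucc : k - (i+1) + 1 = k - i := by omega
    rw [hsucc] at hratio
    -- hratio : p * (n - (k-i-1)) * b n (k-i-1) p = (1-p) * ((k-i-1)+1) * b n (k-i) p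
    have hc1 : ((k - (i+1) : ℕ) : ℝ) = (k:ℝ) - i - 1 := by
      push_cast [Nat.cast_sub (show i+1 ≤ k by omega)]
      ring
    have hc2 : ((n:ℝ) - ((k - (i+1) : ℕ) : ℝ)) = (m:ℝ) + i + 1 := by
      rw [hc1]
      push_cast [hn]
      ring
    rw [hc2, hc1] at hratio
    have hd : (0:ℝ) < p * ((m:ℝ) + i + 1) := rho_denom_pos k m hp0 i
    have hbs : b n (k-(i+1)) p
        = b n (k-i) p * ((1-p) * ((k:ℝ) - i)) / (p * ((m:ℝ) + i + 1)) := by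
      rw [eq_div_iff (ne_of_gt hd)]
      linear_combination hratio
    rw [hbs, ih', cs_succ, rho]
    ring

lemma B_eq_mul_Ssum (k m : ℕ) {p : ℝ} (hp0 : 0 < p) (hp1 : p < 1) :
    B (k+m) k p = b (k+m) k p * Ssum k m p := by
  have h1 : B (k+m) k p = ∑ j ∈ Finset.range (k+1), b (k+m) j p := by
    simp only [B, b]
  have h2 : ∑ j ∈ Finset.range (k+1), b (k+m) j p
      = ∑ j ∈ Finset.range (k+1), b (k+m) (k - j) p := by
    have := Finset.sum_range_reflect (fun j => b (k+m) j p) (k+1)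
    rw [← this]
    exact Finset.sum_congr rfl (fun j hj => by
      have he : k + 1 - 1 - j = k - j := by omega
      rw [he])
  rw [h1, h2, Ssum, Finset.mul_sum]
  exact Finset.sum_congr rfl (fun j hj =>
    b_shift k m hp0 hp1 (Nat.lt_succ_iff.mp (Finset.mem_range.mp hj)))

lemma bD_eq (k m : ℕ) (hk : 0 < k) (hm : 0 < m) {p : ℝ} (hp0 : 0 < p) (hp1 : p < 1) :
    b (k+m) k p * Real.exp (((k+m:ℕ):ℝ) * D ((k:ℝ)/((k+m:ℕ):ℝ)) p)
      = (((k+m).choose k : ℕ):ℝ) * ((k:ℝ)/((k+m:ℕ):ℝ))^k * ((m:ℝ)/((k+m:ℕ):ℝ))^m := by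
  have hnR : (0:ℝ) < ((k+m:ℕ):ℝ) := by positivity
  set nR := ((k+m:ℕ):ℝ) with hnRdef
  have hfpos : (0:ℝ) < (k:ℝ)/nR := by positivity
  have hgpos : (0:ℝ) < (m:ℝ)/nR := by positivity
  have hq : (0:ℝ) < 1 - p := by linarith
  have hcastn : ((k+m:ℕ):ℝ) = (k:ℝ)+m := by push_cast; ring
  have hnR' : (0:ℝ) < (k:ℝ)+m := by rw [← hcastn]; exact hnR
  have h1f : 1 - (k:ℝ)/nR = (m:ℝ)/nR := by
    rw [hnRdef, hcastn]
    field_simp; ring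
  have hDe : nR * D ((k:ℝ)/nR) p
      = (k:ℝ) * Real.log ((k:ℝ)/nR/p) + (m:ℝ) * Real.log ((m:ℝ)/nR/(1-p)) := by
    rw [D, h1f, mul_add]
    congr 1
    · rw [← mul_assoc, mul_comm nR ((k:ℝ)/nR), div_mul_cancel₀ _ (ne_of_gt hnR)]
    · rw [← mul_assoc, mul_comm nR ((m:ℝ)/nR), div_mul_cancel₀ _ (ne_of_gt hnR)]
  have hx : (0:ℝ) < (k:ℝ)/nR/p := by positivity
  have hy : (0:ℝ) < (m:ℝ)/nR/(1-p) := by positivity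
  have hexp : Real.exp (nR * D ((k:ℝ)/nR) p)
      = ((k:ℝ)/nR/p)^k * ((m:ℝ)/nR/(1-p))^m := by
    rw [hDe, Real.exp_add, Real.exp_nat_mul, Real.exp_nat_mul,
      Real.exp_log hx, Real.exp_log hy]
  rw [hexp, b]
  have e1 : p^k * ((k:ℝ)/nR/p)^k = ((k:ℝ)/nR)^k := by
    rw [← mul_pow, mul_div_cancel₀ _ (ne_of_gt hp0)]
  have e2 : (1-p)^(k+m-k) * ((m:ℝ)/nR/(1-p))^m = ((m:ℝ)/nR)^m := by
    have : k + m - k = m := by omega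
    rw [this, ← mul_pow, mul_div_cancel₀ _ (ne_of_gt hq)]
  calc (((k+m).choose k : ℕ):ℝ) * p^k * (1-p)^(k+m-k) * (((k:ℝ)/nR/p)^k * ((m:ℝ)/nR/(1-p))^m)
      = (((k+m).choose k : ℕ):ℝ) * (p^k * ((k:ℝ)/nR/p)^k)
        * ((1-p)^(k+m-k) * ((m:ℝ)/nR/(1-p))^m) := by ring
    _ = _ := by rw [e1, e2]

lemma succ_pow_lt (j : ℕ) (hj : 0 < j) :
    ((j:ℝ)+1)^(j+1) < Real.exp 1 * ((j:ℝ)+1) * (j:ℝ)^j := by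
  have hj0 : (0:ℝ) < (j:ℝ) := by exact_mod_cast hj
  have h1 : 1 + 1/(j:ℝ) < Real.exp (1/(j:ℝ)) := by
    have := Real.add_one_lt_exp (x := 1/(j:ℝ)) (by positivity)
    linarith
  have h2 : (1 + 1/(j:ℝ))^j < Real.exp (1/(j:ℝ))^j := by
    apply pow_lt_pow_left₀ h1 (by positivity) (by omega)
  have h3 : Real.exp (1/(j:ℝ))^j = Real.exp 1 := by
    rw [← Real.exp_nat_mul]
    congr 1
    field_simp
  have h4 : ((j:ℝ)+1)^j = (1 + 1/(j:ℝ))^j * (j:ℝ)^j := by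
    rw [← mul_pow]
    congr 1
    field_simp
  have h5 : ((j:ℝ)+1)^j < Real.exp 1 * (j:ℝ)^j := by
    rw [h4]
    have := mul_lt_mul_of_pos_right (h3 ▸ h2) (by positivity : (0:ℝ) < (j:ℝ)^j)
    linarith
  have h6 : ((j:ℝ)+1)^(j+1) = ((j:ℝ)+1)^j * ((j:ℝ)+1) := by ring
  rw [h6]
  nlinarith [h5]

lemma t_mono (m n : ℕ) (hm : 0 < m) (hmn : m < n) :
    (m.factorial:ℝ) * Real.exp 1 ^ m * (n:ℝ)^n
      < (n.factorial:ℝ) * Real.exp 1 ^ n * (m:ℝ)^m := by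
  induction n, hmn using Nat.le_induction with
  | base =>
    have hkey := succ_pow_lt m hm
    have hpos : (0:ℝ) < (m.factorial:ℝ) * Real.exp 1 ^ m := by positivity
    have hcast : ((m+1:ℕ):ℝ) = (m:ℝ)+1 := by push_cast; ring
    have hfact : ((m+1).factorial : ℝ) = ((m:ℝ)+1) * m.factorial := by
      rw [Nat.factorial_succ]; push_cast; ring
    have h7 : ((m+1:ℕ):ℝ)^(m+1) = ((m:ℝ)+1)^(m+1) := by rw [hcast]
    have h8 : ((m+1).factorial:ℝ) * Real.exp 1^(m+1) * (m:ℝ)^m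
        = ((m:ℝ)+1) * (m.factorial:ℝ) * (Real.exp 1^m * Real.exp 1) * (m:ℝ)^m := by
      rw [hfact, pow_succ]; try ring
    rw [h7, h8]
    nlinarith [mul_lt_mul_of_pos_left hkey hpos]
  | succ n hn ih =>
    have hn1 : 0 < n := by omega
    have hkey := succ_pow_lt n hn1
    have hcast : ((n+1:ℕ):ℝ) = (n:ℝ)+1 := by push_cast; ring
    have hfact : ((n+1).factorial : ℝ) = ((n:ℝ)+1) * n.factorial := by
      rw [Nat.factorial_succ]; push_cast; ring
    have hpos1 : (0:ℝ) < (m.factorial:ℝ) * Real.exp 1 ^ m := by positivity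
    have hpos3 : (0:ℝ) < Real.exp 1 * ((n:ℝ)+1) := by positivity
    have h7 : ((n+1:ℕ):ℝ)^(n+1) = ((n:ℝ)+1)^(n+1) := by rw [hcast]
    have h8 : ((n+1).factorial:ℝ) * Real.exp 1^(n+1) * (m:ℝ)^m
        = Real.exp 1 * ((n:ℝ)+1) * ((n.factorial:ℝ) * Real.exp 1^n * (m:ℝ)^m) := by
      rw [hfact, pow_succ]; try ring
    rw [h7, h8]
    calc (m.factorial:ℝ) * Real.exp 1 ^ m * ((n:ℝ)+1)^(n+1)
        < (m.factorial:ℝ) * Real.exp 1 ^ m * (Real.exp 1 * ((n:ℝ)+1) * (n:ℝ)^n) :=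
          mul_lt_mul_of_pos_left hkey hpos1
      _ = Real.exp 1 * ((n:ℝ)+1) * ((m.factorial:ℝ) * Real.exp 1 ^ m * (n:ℝ)^n) := by ring
      _ < Real.exp 1 * ((n:ℝ)+1) * ((n.factorial:ℝ) * Real.exp 1 ^ n * (m:ℝ)^m) :=
          mul_lt_mul_of_pos_left ih hpos3

lemma stirling_le (m n : ℕ) (hm : 0 < m) (hmn : m ≤ n) :
    Stirling.stirlingSeq n ≤ Stirling.stirlingSeq m := by
  have h := Stirling.stirlingSeq'_antitone (show m-1 ≤ n-1 by omega)
  simp only [Function.comp] at h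
  have h1 : n - 1 + 1 = n := by omega
  have h2 : m - 1 + 1 = m := by omega
  rwa [Nat.succ_eq_add_one, Nat.succ_eq_add_one, h1, h2] at h

lemma stirling_eq (j : ℕ) (hj : 0 < j) :
    Stirling.stirlingSeq j
      = (j.factorial:ℝ) * Real.exp 1 ^ j / (Real.sqrt (2*(j:ℝ)) * (j:ℝ)^j) := by
  have hjp : (0:ℝ) < (j:ℝ) := by exact_mod_cast hj
  have hs : (0:ℝ) < Real.sqrt (2*(j:ℝ)) := Real.sqrt_pos.2 (by linarith)
  have hjj : (0:ℝ) < (j:ℝ)^j := by positivity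
  have hej : (0:ℝ) < Real.exp 1 ^ j := pow_pos (Real.exp_pos 1) j
  rw [Stirling.stirlingSeq, div_pow]
  rw [div_eq_div_iff (by positivity) (by positivity)]
  field_simp

lemma fact_sqrt_ineq (m n : ℕ) (hm : 0 < m) (hmn : m ≤ n) :
    (n.factorial:ℝ) * Real.exp 1 ^ n * (Real.sqrt (2*(m:ℝ)) * (m:ℝ)^m)
      ≤ (m.factorial:ℝ) * Real.exp 1 ^ m * (Real.sqrt (2*(n:ℝ)) * (n:ℝ)^n) := by
  have h := stirling_le m n hm hmn
  rw [stirling_eq m hm, stirling_eq n (lt_of_lt_of_le hm hmn)] at h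
  have hmp : (0:ℝ) < (m:ℝ) := by exact_mod_cast hm
  have hnp : (0:ℝ) < (n:ℝ) := by exact_mod_cast (lt_of_lt_of_le hm hmn)
  have hd1 : (0:ℝ) < Real.sqrt (2*(n:ℝ)) * (n:ℝ)^n := by
    have : (0:ℝ) < Real.sqrt (2*(n:ℝ)) := Real.sqrt_pos.2 (by linarith)
    positivity
  have hd2 : (0:ℝ) < Real.sqrt (2*(m:ℝ)) * (m:ℝ)^m := by
    have : (0:ℝ) < Real.sqrt (2*(m:ℝ)) := Real.sqrt_pos.2 (by linarith)
    positivity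
  rw [div_le_div_iff₀ hd1 hd2] at h
  linarith [h]

lemma fact_e_bound (k : ℕ) (hk : 0 < k) :
    (k.factorial:ℝ) * Real.exp 1 ^ k ≤ Real.exp 1 * Real.sqrt k * (k:ℝ)^k := by
  have h := fact_sqrt_ineq 1 k one_pos hk
  simp only [Nat.factorial_one, Nat.cast_one, pow_one, mul_one, one_pow] at h
  have hsplit : Real.sqrt (2*(k:ℝ)) = Real.sqrt 2 * Real.sqrt (k:ℝ) := by
    rw [← Real.sqrt_mul (by norm_num : (0:ℝ) ≤ 2)]
  rw [hsplit] at h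
  have h2 : (k.factorial:ℝ) * Real.exp 1 ^ k * Real.sqrt 2
      ≤ Real.exp 1 * Real.sqrt (k:ℝ) * (k:ℝ)^k * Real.sqrt 2 := by nlinarith [h]
  have hs2 : (0:ℝ) < Real.sqrt 2 := Real.sqrt_pos.2 (by norm_num)
  exact le_of_mul_le_mul_right h2 hs2

lemma L_gt_one (k m : ℕ) {p : ℝ} (hk : 0 < k) (hp0 : 0 < p) (hp1 : p < 1)
    (hkp : (k : ℝ) ≤ p * (k + m)) :
    1 < ((k:ℝ) + 1 - p * ((k:ℝ)+m) + Real.sqrt ((p * ((k:ℝ)+m) - k + 1) ^ 2 + 4 * (1 - p) * k)) / 2 := by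
  have hx : (0:ℝ) ≤ p * ((k:ℝ)+m) - k + 1 := by linarith [hkp]
  have hkpos : (0:ℝ) < (k:ℝ) := by exact_mod_cast hk
  have hy : (p * ((k:ℝ)+m) - k + 1)^2 < (p * ((k:ℝ)+m) - k + 1) ^ 2 + 4 * (1 - p) * k := by
    nlinarith
  have := (Real.lt_sqrt hx).2 hy
  linarith


theorem binomial_tail_factorial_bounds
    (k n : ℕ) (hk : 0 < k) (hn : 0 < n) (p : ℝ) (hp0 : 0 < p) (hp1 : p < 1)
    (hkp : (k : ℝ) ≤ p * n) :
    1 / (Real.exp 1 * Real.sqrt k) < L n k p / (Real.exp 1 * Real.sqrt k) ∧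
    L n k p / (Real.exp 1 * Real.sqrt k) ≤
      (k : ℝ) ^ k * L n k p / (Real.exp 1 ^ k * (Nat.factorial k : ℝ)) ∧
    (k : ℝ) ^ k * L n k p / (Real.exp 1 ^ k * (Nat.factorial k : ℝ)) <
      B n k p * Real.exp (n * D ((k : ℝ) / n) p) ∧
    B n k p * Real.exp (n * D ((k : ℝ) / n) p) <
      Real.sqrt ((n : ℝ) / ((n : ℝ) - k)) *
        ((k : ℝ) ^ k * U n k p) / (Real.exp 1 ^ k * (Nat.factorial k : ℝ)) := by
  have hkn : k < n := by
    have hnR : (0:ℝ) < (n:ℝ) := by exact_mod_cast hn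
    have h1 : (k:ℝ) < (n:ℝ) := lt_of_le_of_lt hkp (by nlinarith)
    exact_mod_cast h1
  obtain ⟨m, rfl⟩ : ∃ m, n = k + m := ⟨n - k, by omega⟩
  have hm : 0 < m := by omega
  have hcastn : ((k+m:ℕ):ℝ) = (k:ℝ)+(m:ℝ) := by push_cast; ring
  have hkp' : (k:ℝ) ≤ p*((k:ℝ)+m) := by rw [← hcastn]; exact_mod_cast hkp
  have hS1 : 1 ≤ Ssum k m p := Ssum_ge_one k m hp0 hp1
  have hSpos : 0 < Ssum k m p := lt_of_lt_of_le one_pos hS1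
  have hL1 : 1 < L (↑(k+m)) (↑k) p := by
    rw [L, hcastn]; exact L_gt_one k m hk hp0 hp1 hkp'
  have hL0 : 0 < L (↑(k+m)) (↑k) p := lt_trans one_pos hL1
  have hSL : L (↑(k+m)) (↑k) p ≤ Ssum k m p := by
    rw [L, hcastn]; exact Ssum_ge_L k m hp0 hp1 hkp'
  have hSU : Ssum k m p < U (↑(k+m)) (↑k) p := by
    have he : U (↑(k+m):ℝ) (↑k) p = U ((k:ℝ)+↑m) (↑k) p := by rw [hcastn]
    rw [he]; exact Ssum_lt_U k m hk hm hp0 hp1 hkp'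
  -- positivity facts
  have hkk : (0:ℝ) < (k:ℝ)^k := by
    have : (0:ℝ) < (k:ℝ) := by exact_mod_cast hk
    positivity
  have hek : (0:ℝ) < Real.exp 1 ^ k := pow_pos (Real.exp_pos 1) k
  have hkf : (0:ℝ) < (k.factorial:ℝ) := by exact_mod_cast k.factorial_pos
  have hmf : (0:ℝ) < (m.factorial:ℝ) := by exact_mod_cast m.factorial_pos
  have hden : (0:ℝ) < Real.exp 1 ^ k * (k.factorial:ℝ) := mul_pos hek hkf
  have hnRpos : (0:ℝ) < ((k+m:ℕ):ℝ) := by positivity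
  have hmR : (0:ℝ) < (m:ℝ) := by exact_mod_cast hm
  have hem : (0:ℝ) < Real.exp 1 ^ m := pow_pos (Real.exp_pos 1) m
  -- E and its bounds
  set E := (((k+m).choose k:ℕ):ℝ) * ((k:ℝ)/(↑(k+m):ℝ))^k * ((m:ℝ)/(↑(k+m):ℝ))^m with hEdef
  have hBe : B (k+m) k p * Real.exp ((↑(k+m):ℝ) * D ((k:ℝ)/(↑(k+m):ℝ)) p)
      = Ssum k m p * E := by
    rw [B_eq_mul_Ssum k m hp0 hp1]
    calc b (k+m) k p * Ssum k m p * Real.exp ((↑(k+m):ℝ) * D ((k:ℝ)/(↑(k+m):ℝ)) p)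
        = Ssum k m p * (b (k+m) k p * Real.exp ((↑(k+m):ℝ) * D ((k:ℝ)/(↑(k+m):ℝ)) p)) := by
          ring
      _ = Ssum k m p * E := by rw [bD_eq k m hk hm hp0 hp1, hEdef]
  have hchoose : (((k+m).choose k:ℕ):ℝ) * (k.factorial:ℝ) * (m.factorial:ℝ)
      = ((k+m).factorial:ℝ) := by
    have h := Nat.choose_mul_factorial_mul_factorial (Nat.le_add_right k m)
    have h2 : k + m - k = m := by omega
    rw [h2] at h
    exact_mod_cast congrArg (Nat.cast (R := ℝ)) h
  have hfg : ((k:ℝ)/(↑(k+m):ℝ))^k * ((m:ℝ)/(↑(k+m):ℝ))^m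
      = ((k:ℝ)^k * (m:ℝ)^m) / ((↑(k+m):ℝ))^(k+m) := by
    rw [div_pow, div_pow, div_mul_div_comm, pow_add]
  have hE2 : E = (((k+m).choose k:ℕ):ℝ) * (((k:ℝ)^k * (m:ℝ)^m) / ((↑(k+m):ℝ))^(k+m)) := by
    rw [hEdef, mul_assoc, hfg]
  have hcore : (m.factorial:ℝ) * ((↑(k+m):ℝ))^(k+m)
      < ((k+m).factorial:ℝ) * (m:ℝ)^m * Real.exp 1 ^ k := by
    have ht := t_mono m (k+m) hm (by omega)
    rw [pow_add (Real.exp 1) k m] at ht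
    refine lt_of_mul_lt_mul_right ?_ (le_of_lt hem)
    calc (m.factorial:ℝ) * ((↑(k+m):ℝ))^(k+m) * Real.exp 1 ^ m
        = (m.factorial:ℝ) * Real.exp 1 ^ m * ((↑(k+m):ℝ))^(k+m) := by ring
      _ < ((k+m).factorial:ℝ) * (Real.exp 1 ^ k * Real.exp 1 ^ m) * (m:ℝ)^m := ht
      _ = ((k+m).factorial:ℝ) * (m:ℝ)^m * Real.exp 1 ^ k * Real.exp 1 ^ m := by ring
  have hsm : (0:ℝ) < Real.sqrt (2*(m:ℝ)) := Real.sqrt_pos.2 (by linarith)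
  have hW : (0:ℝ) < Real.sqrt ((↑(k+m):ℝ)/(m:ℝ)) := Real.sqrt_pos.2 (by positivity)
  have hcoreU : ((k+m).factorial:ℝ) * Real.exp 1 ^ k * (m:ℝ)^m
      ≤ (m.factorial:ℝ) * Real.sqrt ((↑(k+m):ℝ)/(m:ℝ)) * ((↑(k+m):ℝ))^(k+m) := by
    have hs := fact_sqrt_ineq m (k+m) hm (by omega)
    have hsqrt : Real.sqrt (2*((↑(k+m):ℝ)))
        = Real.sqrt ((↑(k+m):ℝ)/(m:ℝ)) * Real.sqrt (2*(m:ℝ)) := by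
      rw [← Real.sqrt_mul (by positivity)]
      congr 1
      field_simp
    rw [pow_add (Real.exp 1) k m, hsqrt] at hs
    refine le_of_mul_le_mul_right ?_ (mul_pos hem hsm)
    calc ((k+m).factorial:ℝ) * Real.exp 1 ^ k * (m:ℝ)^m * (Real.exp 1 ^ m * Real.sqrt (2*(m:ℝ)))
        = ((k+m).factorial:ℝ) * (Real.exp 1 ^ k * Real.exp 1 ^ m)
          * (Real.sqrt (2*(m:ℝ)) * (m:ℝ)^m) := by ring
      _ ≤ (m.factorial:ℝ) * Real.exp 1 ^ m
          * (Real.sqrt ((↑(k+m):ℝ)/(m:ℝ)) * Real.sqrt (2*(m:ℝ)) * ((↑(k+m):ℝ))^(k+m)) := hs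
      _ = (m.factorial:ℝ) * Real.sqrt ((↑(k+m):ℝ)/(m:ℝ)) * ((↑(k+m):ℝ))^(k+m)
          * (Real.exp 1 ^ m * Real.sqrt (2*(m:ℝ))) := by ring
  have hElow : (k:ℝ)^k / (Real.exp 1 ^ k * (k.factorial:ℝ)) < E := by
    rw [div_lt_iff₀ hden, hE2]
    rw [show (((k+m).choose k:ℕ):ℝ) * (((k:ℝ)^k * (m:ℝ)^m) / ((↑(k+m):ℝ))^(k+m))
        * (Real.exp 1 ^ k * (k.factorial:ℝ))
        = ((((k+m).choose k:ℕ):ℝ) * (k:ℝ)^k * (m:ℝ)^m * (Real.exp 1 ^ k * (k.factorial:ℝ)))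
          / ((↑(k+m):ℝ))^(k+m) from by ring]
    rw [lt_div_iff₀ (pow_pos hnRpos (k+m))]
    refine lt_of_mul_lt_mul_right ?_ (le_of_lt hmf)
    calc (k:ℝ)^k * ((↑(k+m):ℝ))^(k+m) * (m.factorial:ℝ)
        = (k:ℝ)^k * ((m.factorial:ℝ) * ((↑(k+m):ℝ))^(k+m)) := by ring
      _ < (k:ℝ)^k * (((k+m).factorial:ℝ) * (m:ℝ)^m * Real.exp 1 ^ k) :=
          mul_lt_mul_of_pos_left hcore hkk
      _ = (((k+m).choose k:ℕ):ℝ) * (k:ℝ)^k * (m:ℝ)^m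
          * (Real.exp 1 ^ k * (k.factorial:ℝ)) * (m.factorial:ℝ) := by
          rw [← hchoose]; ring
  have hEup : E ≤ Real.sqrt ((↑(k+m):ℝ)/(m:ℝ)) * (k:ℝ)^k
      / (Real.exp 1 ^ k * (k.factorial:ℝ)) := by
    rw [le_div_iff₀ hden, hE2]
    rw [show (((k+m).choose k:ℕ):ℝ) * (((k:ℝ)^k * (m:ℝ)^m) / ((↑(k+m):ℝ))^(k+m))
        * (Real.exp 1 ^ k * (k.factorial:ℝ))
        = ((((k+m).choose k:ℕ):ℝ) * (k:ℝ)^k * (m:ℝ)^m * (Real.exp 1 ^ k * (k.factorial:ℝ)))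
          / ((↑(k+m):ℝ))^(k+m) from by ring]
    rw [div_le_iff₀ (pow_pos hnRpos (k+m))]
    refine le_of_mul_le_mul_right ?_ hmf
    calc (((k+m).choose k:ℕ):ℝ) * (k:ℝ)^k * (m:ℝ)^m
          * (Real.exp 1 ^ k * (k.factorial:ℝ)) * (m.factorial:ℝ)
        = (k:ℝ)^k * (((((k+m).choose k:ℕ):ℝ) * (k.factorial:ℝ) * (m.factorial:ℝ))
            * Real.exp 1 ^ k * (m:ℝ)^m) := by ring
      _ = (k:ℝ)^k * (((k+m).factorial:ℝ) * Real.exp 1 ^ k * (m:ℝ)^m) := by rw [hchoose]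
      _ ≤ (k:ℝ)^k * ((m.factorial:ℝ) * Real.sqrt ((↑(k+m):ℝ)/(m:ℝ)) * ((↑(k+m):ℝ))^(k+m)) :=
          mul_le_mul_of_nonneg_left hcoreU hkk.le
      _ = Real.sqrt ((↑(k+m):ℝ)/(m:ℝ)) * (k:ℝ)^k * ((↑(k+m):ℝ))^(k+m) * (m.factorial:ℝ) := by
          ring
  have hsqk : (0:ℝ) < Real.exp 1 * Real.sqrt k := by
    have : (0:ℝ) < (k:ℝ) := by exact_mod_cast hk
    have := Real.sqrt_pos.2 this
    positivity
  refine ⟨?_, ?_, ?_, ?_⟩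
  · exact (div_lt_div_iff_of_pos_right hsqk).2 hL1
  · rw [div_le_div_iff₀ hsqk hden]
    have hfe := fact_e_bound k hk
    nlinarith [mul_le_mul_of_nonneg_left hfe hL0.le]
  · rw [hBe]
    calc (k:ℝ)^k * L (↑(k+m)) (↑k) p / (Real.exp 1 ^ k * (k.factorial:ℝ))
        = L (↑(k+m)) (↑k) p * ((k:ℝ)^k / (Real.exp 1 ^ k * (k.factorial:ℝ))) := by ring
      _ < L (↑(k+m)) (↑k) p * E := mul_lt_mul_of_pos_left hElow hL0
      _ ≤ Ssum k m p * E := mul_le_mul_of_nonneg_right hSL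
          (le_of_lt (lt_trans (div_pos hkk hden) hElow))
  · have hsub : ((↑(k+m):ℝ)) - (k:ℝ) = (m:ℝ) := by rw [hcastn]; ring
    rw [hBe, hsub]
    have hXpos : (0:ℝ) < Real.sqrt ((↑(k+m):ℝ)/(m:ℝ)) * (k:ℝ)^k
        / (Real.exp 1 ^ k * (k.factorial:ℝ)) := by positivity
    calc Ssum k m p * E
        ≤ Ssum k m p * (Real.sqrt ((↑(k+m):ℝ)/(m:ℝ)) * (k:ℝ)^k
            / (Real.exp 1 ^ k * (k.factorial:ℝ))) :=
          mul_le_mul_of_nonneg_left hEup hSpos.le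
      _ < U (↑(k+m)) (↑k) p * (Real.sqrt ((↑(k+m):ℝ)/(m:ℝ)) * (k:ℝ)^k
            / (Real.exp 1 ^ k * (k.factorial:ℝ))) :=
          mul_lt_mul_of_pos_right hSU hXpos
      _ = Real.sqrt ((↑(k+m):ℝ)/(m:ℝ)) * ((k:ℝ)^k * U (↑(k+m)) (↑k) p)
            / (Real.exp 1 ^ k * (k.factorial:ℝ)) := by ring
end
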